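/- arXiv:2512.14966 — 2 statements merged into one kernel-verified Lean document; each statement's English description precedes it below -/
import Mathlib

section
/- Fix 1 ≤ r < ∞, d ∈ ℕ with d ≥ 1, and ε > 0. Let Q = {k_{2j} : j ≥ 1} ⊆ ℕ, where k_j = a^(j−1) and a = ⌈(32/ε + 2)^r⌉. Then for all m̄ = (m_1 < … < m_d) with m_1,…,m_d ∈ Q, all k ∈ Q with k > m_d, and all step preserving maps F : S⁺_{ℓ∞^k} → S⁺_{ℓ_r^k} with ω_F(1/d) ≤ ε/8, one has ‖F(z(m̄)) − k^{−1/r}·∑_{i=1}^k e_i‖_r ≤ ε, where (e_i)_{i=1}^k is the standard basis of ℓ_r^k. -/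
/-- The sup norm (`ℓ∞` norm) on `ℝ^k`. -/
noncomputable def supNorm {k : ℕ} (x : Fin k → ℝ) : ℝ := ⨆ i, |x i|

/-- The `ℓ_r` norm on `ℝ^k`. -/
noncomputable def lrNorm (r : ℝ) {k : ℕ} (x : Fin k → ℝ) : ℝ :=
  (∑ i, |x i| ^ r) ^ (1 / r)

/-- The vector `z(m̄) = ∑_{s=1}^d (1 - (s-1)/d)·1_{(m_{s-1}, m_s]}` in `ℝ^k`, where
coordinate `i : Fin k` corresponds to the index `i+1 ∈ {1,…,k}`. -/
noncomputable def zVec (d k : ℕ) (m : ℕ → ℕ) : Fin k → ℝ :=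
  fun i => ∑ s ∈ Finset.Icc 1 d, (1 - ((s : ℝ) - 1) / (d : ℝ)) *
    (if m (s - 1) ≤ (i : ℕ) ∧ (i : ℕ) < m s then 1 else 0)

private def blk (k l u : ℕ) : Finset (Fin k) :=
  Finset.univ.filter (fun i => l ≤ i.1 ∧ i.1 < u)

private lemma mem_blk {k l u : ℕ} {i : Fin k} : i ∈ blk k l u ↔ l ≤ i.1 ∧ i.1 < u := by
  simp [blk]

private lemma card_blk {k l u : ℕ} (h : u ≤ k) : (blk k l u).card = u - l := by
  classical
  have : blk k l u = (Finset.Ico l u).attachFin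
      (fun x hx => lt_of_lt_of_le (Finset.mem_Ico.mp hx).2 h) := by
    ext i; simp [blk, Finset.mem_attachFin, Finset.mem_Ico]
  rw [this, Finset.card_attachFin, Nat.card_Ico]

private lemma sum_blk_split {k : ℕ} (f : Fin k → ℝ) {l u v : ℕ} (h1 : l ≤ u) (h2 : u ≤ v) :
    ∑ i ∈ blk k l v, f i = ∑ i ∈ blk k l u, f i + ∑ i ∈ blk k u v, f i := by
  rw [← Finset.sum_union]
  · apply Finset.sum_congr _ (fun _ _ => rfl)
    ext i; simp only [Finset.mem_union, mem_blk]; omega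
  · rw [Finset.disjoint_left]; intro i hi hj
    rw [mem_blk] at hi hj; omega

private lemma sum_blocks {k : ℕ} (f : Fin k → ℝ) (m : ℕ → ℕ)
    (hm : ∀ s, m s ≤ m (s + 1)) :
    ∀ t, ∑ s ∈ Finset.Icc 1 t, (∑ i ∈ blk k (m (s-1)) (m s), f i)
      = ∑ i ∈ blk k (m 0) (m t), f i := by
  have hmono : Monotone m := monotone_nat_of_le_succ hm
  intro t; induction t with
  | zero =>
      rw [show Finset.Icc 1 0 = ∅ by rw [Finset.Icc_eq_empty] <;> omega, Finset.sum_empty]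
      exact (Finset.sum_eq_zero (fun i hi => by rw [mem_blk] at hi; omega)).symm
  | succ n ih =>
      rw [Finset.sum_Icc_succ_top (by omega : 1 ≤ n + 1), ih,
        sum_blk_split f (hmono (Nat.zero_le n)) (hm n)]
      norm_num

private lemma m_mono {d : ℕ} {m : ℕ → ℕ} (hmono : ∀ s, s < d → m s < m (s+1)) :
    ∀ p q, p ≤ q → q ≤ d → m p ≤ m q := by
  intro p q hpq hqd
  induction q with
  | zero => rw [Nat.le_zero.mp hpq]
  | succ n ih =>
      rcases Nat.eq_or_lt_of_le hpq with h | h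
      · rw [h]
      · exact le_trans (ih (by omega) (by omega)) (le_of_lt (hmono n (by omega)))

private lemma zVec_apply {d k : ℕ} {m : ℕ → ℕ} {i : Fin k} {s : ℕ}
    (hs1 : 1 ≤ s) (hsd : s ≤ d)
    (hmm : ∀ p q, p ≤ q → q ≤ d → m p ≤ m q)
    (hlo : m (s-1) ≤ i.1) (hhi : i.1 < m s) :
    zVec d k m i = 1 - ((s:ℝ)-1)/(d:ℝ) := by
  unfold zVec
  rw [Finset.sum_eq_single s]
  · rw [if_pos ⟨hlo, hhi⟩, mul_one]
  · intro t ht hts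
    rw [Finset.mem_Icc] at ht
    rw [if_neg, mul_zero]
    rintro ⟨h1, h2⟩
    rcases lt_or_gt_of_ne hts with h | h
    · have : m t ≤ m (s-1) := hmm t (s-1) (by omega) (by omega)
      omega
    · have : m s ≤ m (t-1) := hmm s (t-1) (by omega) (by omega)
      omega
  · intro h; exact absurd (Finset.mem_Icc.mpr ⟨hs1, hsd⟩) h

private lemma zVec_tail {d k : ℕ} {m : ℕ → ℕ} {i : Fin k}
    (hmm : ∀ p q, p ≤ q → q ≤ d → m p ≤ m q)
    (h : m d ≤ i.1) : zVec d k m i = 0 := by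
  unfold zVec
  apply Finset.sum_eq_zero
  intro t ht; rw [Finset.mem_Icc] at ht
  rw [if_neg, mul_zero]
  rintro ⟨h1, h2⟩
  have := hmm t d ht.2 le_rfl
  omega

private lemma exists_block {d : ℕ} {m : ℕ → ℕ} (hm0 : m 0 = 0) {n : ℕ} (h : n < m d) :
    ∃ s, 1 ≤ s ∧ s ≤ d ∧ m (s-1) ≤ n ∧ n < m s := by
  classical
  have hex : ∃ s, n < m s := ⟨d, h⟩
  refine ⟨Nat.find hex, ?_, Nat.find_le h, ?_, Nat.find_spec hex⟩
  · rcases Nat.eq_zero_or_pos (Nat.find hex) with h0 | h0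
    · have := Nat.find_spec hex; rw [h0, hm0] at this; omega
    · exact h0
  · rcases Nat.eq_zero_or_pos (Nat.find hex) with h0 | h0
    · have := Nat.find_spec hex; rw [h0, hm0] at this; omega
    · have := Nat.find_min hex (show Nat.find hex - 1 < Nat.find hex by omega)
      omega

private lemma supNorm_eq_one {k : ℕ} {x : Fin k → ℝ} (h1 : ∀ i, |x i| ≤ 1)
    (i0 : Fin k) (h2 : x i0 = 1) : supNorm x = 1 := by
  have : Nonempty (Fin k) := ⟨i0⟩
  refine le_antisymm (ciSup_le h1) ?_
  have := le_ciSup (f := fun i => |x i|) (Set.Finite.bddAbove (Set.finite_range _)) i0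
  simp only [h2, abs_one] at this
  exact this

private lemma supNorm_le {k : ℕ} [Nonempty (Fin k)] {x : Fin k → ℝ} {c : ℝ}
    (h : ∀ i, |x i| ≤ c) : supNorm x ≤ c := ciSup_le h

private lemma rpow_inv_r {r : ℝ} (hr : 1 ≤ r) {x : ℝ} (hx : 0 ≤ x) : (x ^ r) ^ (1/r) = x := by
  rw [← Real.rpow_mul hx, mul_one_div, div_self (by linarith), Real.rpow_one]

private lemma rpow_r_inv {r : ℝ} (hr : 1 ≤ r) {x : ℝ} (hx : 0 ≤ x) : (x ^ (1/r)) ^ r = x := by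
  rw [← Real.rpow_mul hx, one_div, inv_mul_cancel₀ (by linarith), Real.rpow_one]

private lemma rpow_subadd {r : ℝ} (hr : 1 ≤ r) {x y : ℝ} (hx : 0 ≤ x) (hy : 0 ≤ y) :
    (x + y) ^ (1/r) ≤ x ^ (1/r) + y ^ (1/r) := by
  lift x to NNReal using hx
  lift y to NNReal using hy
  have := NNReal.rpow_add_le_add_rpow (p := 1/r) x y (by positivity)
    ((div_le_one (by linarith : (0:ℝ) < r)).mpr (by linarith))
  exact_mod_cast this

private lemma abs_rpow_diff {r : ℝ} (hr : 1 ≤ r) {x y : ℝ} (hx : 0 ≤ x) (hy : 0 ≤ y) :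
    |x ^ (1/r) - y ^ (1/r)| ≤ |x - y| ^ (1/r) := by
  have hmain : ∀ a b : ℝ, 0 ≤ a → 0 ≤ b → b ≤ a → a ^ (1/r) - b ^ (1/r) ≤ (a - b) ^ (1/r) := by
    intro a b ha hb hba
    have h1 : a ^ (1/r) ≤ (a - b) ^ (1/r) + b ^ (1/r) := by
      have h2 := rpow_subadd hr (show (0:ℝ) ≤ a - b by linarith) hb
      rw [sub_add_cancel] at h2
      exact h2
    linarith
  rcases le_total y x with h | h
  · rw [abs_of_nonneg (by linarith : (0:ℝ) ≤ x - y),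
      abs_of_nonneg (sub_nonneg.2 (Real.rpow_le_rpow hy h (by positivity)))]
    exact hmain x y hx hy h
  · rw [abs_sub_comm, abs_sub_comm x y,
      abs_of_nonneg (by linarith : (0:ℝ) ≤ y - x),
      abs_of_nonneg (sub_nonneg.2 (Real.rpow_le_rpow hx h (by positivity)))]
    exact hmain y x hy hx h

private lemma lr_tri {r : ℝ} (hr : 1 ≤ r) {k : ℕ} (f g : Fin k → ℝ) :
    lrNorm r (f - g) ≤ lrNorm r f + lrNorm r g := by
  unfold lrNorm
  have := Real.Lp_add_le Finset.univ f (-g) hr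
  simp only [Pi.neg_apply, abs_neg] at this
  calc (∑ i, |(f - g) i| ^ r) ^ (1/r) = (∑ i, |f i + -g i| ^ r) ^ (1/r) := by
        apply congrArg (· ^ (1/r)); apply Finset.sum_congr rfl; intros; simp [sub_eq_add_neg]
    _ ≤ _ := this

set_option maxHeartbeats 2000000 in
/-- Theorem 6.2 of the paper: concentration inequality for step preserving
maps `F : S⁺_{ℓ∞^k} → S⁺_{ℓ_r^k}` along `Q = {k_{2j} : j ≥ 1}` with `k_j = a^(j-1)`,
`a = ⌈(32/ε + 2)^r⌉`. -/
theorem stmt_18 (r : ℝ) (hr : 1 ≤ r) (d : ℕ) (hd : 1 ≤ d) (ε : ℝ) (hε : 0 < ε)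
    (Q : Set ℕ)
    (hQ : Q = {t | ∃ j : ℕ, 1 ≤ j ∧ t = (⌈(32 / ε + 2 : ℝ) ^ r⌉₊) ^ (2 * j - 1)})
    (m : ℕ → ℕ) (hm0 : m 0 = 0)
    (hmono : ∀ s, s < d → m s < m (s + 1))
    (hmQ : ∀ s, 1 ≤ s → s ≤ d → m s ∈ Q)
    (k : ℕ) (hkQ : k ∈ Q) (hkm : m d < k)
    (F : (Fin k → ℝ) → (Fin k → ℝ))
    (hFmaps : ∀ x : Fin k → ℝ, supNorm x = 1 → (∀ i, 0 ≤ x i) →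
      (lrNorm r (F x) = 1 ∧ ∀ i, 0 ≤ F x i))
    (hstep : ∀ x : Fin k → ℝ, supNorm x = 1 → (∀ i, 0 ≤ x i) →
      ∀ i j, x i = x j → F x i = F x j)
    (homega : ∀ x y : Fin k → ℝ, supNorm x = 1 → (∀ i, 0 ≤ x i) →
      supNorm y = 1 → (∀ i, 0 ≤ y i) → supNorm (x - y) ≤ 1 / (d : ℝ) →
      lrNorm r (F x - F y) ≤ ε / 8) :
    lrNorm r (F (zVec d k m) - fun _ => (k : ℝ) ^ (-(1 / r))) ≤ ε := by
  classical
  have hr0 : (0:ℝ) < r := lt_of_lt_of_le one_pos hr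
  have hir0 : (0:ℝ) < 1/r := by positivity
  have hir1 : 1/r ≤ 1 := by rw [div_le_one hr0]; exact hr
  set a : ℕ := ⌈(32 / ε + 2 : ℝ) ^ r⌉₊ with ha_def
  have hx0 : (0:ℝ) < 32/ε + 2 := by positivity
  have haR : (32/ε + 2:ℝ) ^ r ≤ (a:ℝ) := Nat.le_ceil _
  have ha1 : 1 ≤ a := by
    have := Nat.ceil_pos.mpr (Real.rpow_pos_of_pos hx0 r)
    omega
  rw [hQ] at hkQ hmQ
  obtain ⟨jk, hjk1, hjkeq⟩ := hkQ
  have hk1 : 1 ≤ k := by rw [hjkeq]; exact Nat.one_le_pow _ _ (by omega)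
  have hK0 : (0:ℝ) < (k:ℝ) := by exact_mod_cast hk1
  have hmm : ∀ p q, p ≤ q → q ≤ d → m p ≤ m q := m_mono hmono
  have hmlt : ∀ s, 1 ≤ s → s ≤ d → m (s-1) < m s := by
    intro s h1 h2
    have := hmono (s-1) (by omega)
    rwa [show s-1+1 = s by omega] at this
  have hm1pos : 1 ≤ m 1 := by
    obtain ⟨j, hj1, hjeq⟩ := hmQ 1 le_rfl hd
    rw [hjeq]; exact Nat.one_le_pow _ _ (by omega)
  have hmspos : ∀ s, 1 ≤ s → s ≤ d → 1 ≤ m s := by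
    intro s h1 h2
    exact le_trans hm1pos (hmm 1 s h1 h2)
  set z := zVec d k m with hz_def
  have hd0 : (0:ℝ) < (d:ℝ) := by exact_mod_cast hd
  have hzval : ∀ (i : Fin k), ∀ s, 1 ≤ s → s ≤ d → m (s-1) ≤ i.1 → i.1 < m s →
      z i = 1 - ((s:ℝ)-1)/(d:ℝ) := fun i s h1 h2 h3 h4 => zVec_apply h1 h2 hmm h3 h4
  have hvbound : ∀ s:ℕ, 1 ≤ s → s ≤ d →
      0 ≤ 1 - ((s:ℝ)-1)/(d:ℝ) ∧ 1 - ((s:ℝ)-1)/(d:ℝ) ≤ 1 := by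
    intro s h1 h2
    have hs : (1:ℝ) ≤ (s:ℝ) := by exact_mod_cast h1
    have hsd : (s:ℝ) ≤ (d:ℝ) := by exact_mod_cast h2
    constructor
    · have h3 : ((s:ℝ)-1)/(d:ℝ) ≤ 1 := by rw [div_le_one hd0]; linarith
      linarith
    · have h3 : 0 ≤ ((s:ℝ)-1)/(d:ℝ) := div_nonneg (by linarith) hd0.le
      linarith
  have hz0 : ∀ i, 0 ≤ z i := by
    intro i
    rcases lt_or_ge i.1 (m d) with h | h
    · obtain ⟨s, h1, h2, h3, h4⟩ := exists_block hm0 h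
      rw [hzval i s h1 h2 h3 h4]; exact (hvbound s h1 h2).1
    · rw [hz_def, zVec_tail hmm h]
  have hzabs : ∀ i, |z i| ≤ 1 := by
    intro i
    rw [abs_of_nonneg (hz0 i)]
    rcases lt_or_ge i.1 (m d) with h | h
    · obtain ⟨s, h1, h2, h3, h4⟩ := exists_block hm0 h
      rw [hzval i s h1 h2 h3 h4]; exact (hvbound s h1 h2).2
    · rw [hz_def, zVec_tail hmm h]; norm_num
  have hz1 : supNorm z = 1 := by
    apply supNorm_eq_one hzabs ⟨0, by omega⟩
    have := hzval ⟨0, by omega⟩ 1 le_rfl hd (by simp [hm0]) (by show 0 < m 1; omega)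
    simpa using this
  obtain ⟨hFz1, hFz0⟩ := hFmaps z hz1 hz0
  set κ : ℝ := (k:ℝ) ^ (-(1/r)) with hκ_def
  have hκ0 : 0 ≤ κ := Real.rpow_nonneg hK0.le _
  have hκr : κ ^ r = (k:ℝ)⁻¹ := by
    rw [hκ_def, ← Real.rpow_mul hK0.le, show -(1/r)*r = -1 by field_simp,
      Real.rpow_neg_one]
  have hu1 : lrNorm r (fun _ : Fin k => κ) = 1 := by
    unfold lrNorm
    calc (∑ _i : Fin k, |κ| ^ r) ^ (1/r) = ((k:ℝ) * (k:ℝ)⁻¹) ^ (1/r) := by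
          rw [Finset.sum_const, Finset.card_univ, Fintype.card_fin, nsmul_eq_mul,
            abs_of_nonneg hκ0, hκr]
      _ = 1 := by rw [mul_inv_cancel₀ hK0.ne', Real.one_rpow]
  rcases le_or_gt 2 ε with hε2 | hε2
  · calc lrNorm r (F z - fun _ => κ) ≤ lrNorm r (F z) + lrNorm r (fun _ => κ) :=
          lr_tri hr _ _
      _ = 2 := by rw [hFz1, hu1]; norm_num
      _ ≤ ε := hε2
  -- MAIN CASE
  have hA1 : (1:ℝ) ≤ (a:ℝ) := by exact_mod_cast ha1
  have hA0 : (0:ℝ) < (a:ℝ) := by linarith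
  have hε32 : (18:ℝ) ≤ 32/ε + 2 := by
    have h16 : (16:ℝ) ≤ 32/ε := by rw [le_div_iff₀ hε]; linarith
    linarith
  have haRr : (32/ε + 2 : ℝ) ≤ (a:ℝ) ^ (1/r) := by
    calc (32/ε+2:ℝ) = ((32/ε+2)^r)^(1/r) := (rpow_inv_r hr hx0.le).symm
      _ ≤ (a:ℝ)^(1/r) := Real.rpow_le_rpow (by positivity) haR hir0.le
  have hAir : (a:ℝ)^(1/r) ≤ (a:ℝ) := by
    calc (a:ℝ)^(1/r) ≤ (a:ℝ)^(1:ℝ) := Real.rpow_le_rpow_of_exponent_le hA1 hir1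
      _ = (a:ℝ) := Real.rpow_one _
  have ha18 : (18:ℝ) ≤ (a:ℝ) := le_trans (le_trans hε32 haRr) hAir
  have ha18n : 18 ≤ a := by exact_mod_cast ha18
  -- gap lemmas
  have hQgap : ∀ p q : ℕ, (∃ j, 1 ≤ j ∧ p = a ^ (2*j-1)) → (∃ j, 1 ≤ j ∧ q = a ^ (2*j-1)) →
      p < q → a * a * p ≤ q := by
    rintro p q ⟨i, hi1, rfl⟩ ⟨j, hj1, rfl⟩ hpq
    have hij : 2*i - 1 < 2*j - 1 := by
      by_contra hcon
      exact absurd (Nat.pow_le_pow_right (by omega) (by omega)) (not_le.mpr hpq)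
    have h2 : 2*i - 1 + 2 ≤ 2*j - 1 := by omega
    calc a * a * a ^ (2*i-1) = a ^ (2*i-1+2) := by ring
      _ ≤ a ^ (2*j-1) := Nat.pow_le_pow_right (by omega) h2
  have gapd : ∀ s, 1 ≤ s → s ≤ d → a * a * m (s-1) ≤ m s := by
    intro s h1 h2
    rcases Nat.eq_or_lt_of_le h1 with h | h
    · rw [← h]; simp [hm0]
    · exact hQgap _ _ (hmQ (s-1) (by omega) (by omega)) (hmQ s h1 h2) (hmlt s h1 h2)
  have gapk : a * a * m d ≤ k := hQgap _ _ (hmQ d hd le_rfl) ⟨jk, hjk1, hjkeq⟩ hkm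
  have gapd' : ∀ s, 1 ≤ s → s ≤ d → a * m (s-1) ≤ m s := by
    intro s h1 h2
    exact le_trans (mul_le_mul_left (Nat.le_mul_of_pos_left a (by omega)) (m (s-1)))
      (gapd s h1 h2)
  have gapk' : a * m d ≤ k := by
    exact le_trans (mul_le_mul_left (Nat.le_mul_of_pos_left a (by omega)) (m d)) gapk
  -- the vector y
  set m' : ℕ → ℕ := fun s => a * m s with hm'_def
  have hm'0 : m' 0 = 0 := by simp [hm'_def, hm0]
  have hm'mono : ∀ p q, p ≤ q → q ≤ d → m' p ≤ m' q := fun p q h1 h2 =>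
    Nat.mul_le_mul_left a (hmm p q h1 h2)
  set y := zVec d k m' with hy_def
  have hyval : ∀ (i : Fin k), ∀ s, 1 ≤ s → s ≤ d → m' (s-1) ≤ i.1 → i.1 < m' s →
      y i = 1 - ((s:ℝ)-1)/(d:ℝ) := fun i s h1 h2 h3 h4 => zVec_apply h1 h2 hm'mono h3 h4
  have hy0 : ∀ i, 0 ≤ y i := by
    intro i
    rcases lt_or_ge i.1 (m' d) with h | h
    · obtain ⟨s, h1, h2, h3, h4⟩ := exists_block hm'0 h
      rw [hyval i s h1 h2 h3 h4]; exact (hvbound s h1 h2).1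
    · rw [hy_def, zVec_tail hm'mono h]
  have hyabs : ∀ i, |y i| ≤ 1 := by
    intro i
    rw [abs_of_nonneg (hy0 i)]
    rcases lt_or_ge i.1 (m' d) with h | h
    · obtain ⟨s, h1, h2, h3, h4⟩ := exists_block hm'0 h
      rw [hyval i s h1 h2 h3 h4]; exact (hvbound s h1 h2).2
    · rw [hy_def, zVec_tail hm'mono h]; norm_num
  have hy1 : supNorm y = 1 := by
    apply supNorm_eq_one hyabs ⟨0, by omega⟩
    have hm'1 : 1 ≤ m' 1 := by
      rw [hm'_def]; exact Nat.one_le_iff_ne_zero.mpr (by positivity)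
    have := hyval ⟨0, by omega⟩ 1 le_rfl hd (by simp [hm'0]) (by show 0 < m' 1; omega)
    simpa using this
  obtain ⟨hFy1, hFy0⟩ := hFmaps y hy1 hy0
  -- sup distance between z and y
  have hzy : supNorm (z - y) ≤ 1/(d:ℝ) := by
    have hne : Nonempty (Fin k) := ⟨⟨0, by omega⟩⟩
    apply supNorm_le
    intro i
    rw [Pi.sub_apply]
    rcases lt_or_ge i.1 (m d) with h | h
    · obtain ⟨s, h1, h2, h3, h4⟩ := exists_block hm0 h
      have hzv : z i = 1 - ((s:ℝ)-1)/(d:ℝ) := hzval i s h1 h2 h3 h4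
      rcases le_or_gt (m' (s-1)) i.1 with hcase | hcase
      · have hyv : y i = 1 - ((s:ℝ)-1)/(d:ℝ) := by
          apply hyval i s h1 h2 hcase
          calc i.1 < m s := h4
            _ ≤ m' s := Nat.le_mul_of_pos_left _ (by omega)
        rw [hzv, hyv, sub_self, abs_zero]
        positivity
      · have hs2 : 2 ≤ s := by
          rcases Nat.eq_or_lt_of_le h1 with hh | hh
          · exfalso
            rw [← hh] at hcase
            simp [hm'_def, hm0] at hcase
          · omega
        have hyv : y i = 1 - ((↑(s-1) : ℝ) - 1)/(d:ℝ) := by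
          apply hyval i (s-1) (by omega) (by omega)
          · show m' (s-1-1) ≤ i.1
            calc m' (s-1-1) = a * m (s-2) := by rw [show s-1-1 = s-2 from by omega]
              _ ≤ a * a * m (s-2) := mul_le_mul_left (Nat.le_mul_of_pos_left a (by omega)) _
              _ ≤ m (s-1) := by
                  have := gapd (s-1) (by omega) (by omega)
                  rwa [show s-1-1 = s-2 by omega] at this
              _ ≤ i.1 := h3
          · exact hcase
        have hcast : ((↑(s-1) : ℝ)) = (s:ℝ) - 1 := by
          have h1' : (1:ℕ) ≤ s := h1
          push_cast [Nat.cast_sub h1']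
          ring
        rw [hzv, hyv, hcast]
        have heq : (1 - ((s:ℝ)-1)/(d:ℝ)) - (1 - ((s:ℝ) - 1 - 1)/(d:ℝ)) = -(1/(d:ℝ)) := by
          field_simp
          ring
        rw [heq, abs_neg, abs_of_nonneg (by positivity)]
    · have hzv : z i = 0 := by rw [hz_def]; exact zVec_tail hmm h
      rcases le_or_gt (m' d) i.1 with hcase | hcase
      · have hyv : y i = 0 := by rw [hy_def]; exact zVec_tail hm'mono hcase
        rw [hzv, hyv, sub_self, abs_zero]
        positivity
      · have hyv : y i = 1 - ((d:ℝ)-1)/(d:ℝ) := by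
          apply hyval i d hd le_rfl _ hcase
          show m' (d-1) ≤ i.1
          calc m' (d-1) = a * m (d-1) := rfl
            _ ≤ m d := gapd' d hd le_rfl
            _ ≤ i.1 := h
        rw [hzv, hyv]
        have heq : (0:ℝ) - (1 - ((d:ℝ)-1)/(d:ℝ)) = -(1/(d:ℝ)) := by
          field_simp
          ring
        rw [heq, abs_neg, abs_of_nonneg (by positivity)]
  have hω : lrNorm r (F z - F y) ≤ ε/8 := homega z y hz1 hz0 hy1 hy0 hzy
  -- core quantities
  set D := fun i => F z i - F y i with hD_def
  have hDabs : ∀ i : Fin k, (0:ℝ) ≤ |D i| ^ r := fun i => Real.rpow_nonneg (abs_nonneg _) r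
  have hDsum : ∑ i, |D i| ^ r ≤ (ε/8) ^ r := by
    have h1 : (∑ i, |D i| ^ r) ^ (1/r) ≤ ε/8 := hω
    have h2 : ((∑ i, |D i| ^ r) ^ (1/r))^r ≤ (ε/8)^r :=
      Real.rpow_le_rpow (Real.rpow_nonneg (Finset.sum_nonneg fun i _ => hDabs i) _) h1 hr0.le
    rwa [rpow_r_inv hr (Finset.sum_nonneg fun i _ => hDabs i)] at h2
  have hidxlt : ∀ n : ℕ, min n (k-1) < k := by intro n; omega
  set idx : ℕ → Fin k := fun n => ⟨min n (k-1), hidxlt n⟩ with hidx_def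
  have hidxval : ∀ n, n < k → (idx n).1 = n := by
    intro n hn; simp only [hidx_def]; omega
  set b : ℕ → ℝ := fun s => F z (idx (m s - 1)) with hb_def
  set c : ℝ := F z (idx (k-1)) with hc_def
  set b' : ℕ → ℝ := fun s => F y (idx (a * m s - 1)) with hb'_def
  have hmsk : ∀ s, s ≤ d → m s < k := fun s hs => lt_of_le_of_lt (hmm s d hs le_rfl) hkm
  have hamsk : ∀ s, s ≤ d → a * m s ≤ k := fun s hs =>
    le_trans (Nat.mul_le_mul_left a (hmm s d hs le_rfl)) gapk'
  have hb0 : ∀ s, 0 ≤ b s := fun s => hFz0 _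
  have hb'0 : ∀ s, 0 ≤ b' s := fun s => hFy0 _
  have hc0 : 0 ≤ c := hFz0 _
  have hbconst : ∀ s, 1 ≤ s → s ≤ d → ∀ i ∈ blk k (m (s-1)) (m s), F z i = b s := by
    intro s h1 h2 i hi
    rw [mem_blk] at hi
    apply hstep z hz1 hz0
    have hms1 : 1 ≤ m s := hmspos s h1 h2
    have hidxv : (idx (m s - 1)).1 = m s - 1 := hidxval _ (by have := hmsk s h2; omega)
    have hlt := hmlt s h1 h2
    rw [hzval i s h1 h2 hi.1 hi.2,
      hzval (idx (m s - 1)) s h1 h2 (by rw [hidxv]; omega) (by rw [hidxv]; omega)]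
  have hcconst : ∀ i ∈ blk k (m d) k, F z i = c := by
    intro i hi
    rw [mem_blk] at hi
    apply hstep z hz1 hz0
    have hidxv : (idx (k-1)).1 = k - 1 := hidxval _ (by omega)
    have e1 : z i = 0 := zVec_tail hmm hi.1
    have e2 : z (idx (k-1)) = 0 := zVec_tail hmm (by rw [hidxv]; omega)
    rw [e1, e2]
  have hb'const : ∀ s, 1 ≤ s → s ≤ d → ∀ i ∈ blk k (a * m (s-1)) (a * m s), F y i = b' s := by
    intro s h1 h2 i hi
    rw [mem_blk] at hi
    apply hstep y hy1 hy0
    have hams1 : 1 ≤ a * m s := Nat.mul_pos (by omega) (hmspos s h1 h2)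
    have hidxv : (idx (a * m s - 1)).1 = a * m s - 1 :=
      hidxval _ (by have := hamsk s h2; omega)
    have hlt : a * m (s-1) < a * m s :=
      (mul_lt_mul_iff_right₀ (show 0 < a by omega)).mpr (hmlt s h1 h2)
    rw [hyval i s h1 h2 hi.1 hi.2,
      hyval (idx (a * m s - 1)) s h1 h2
        (by show a * m (s-1) ≤ (idx (a * m s - 1)).1; rw [hidxv]; omega)
        (by show (idx (a * m s - 1)).1 < a * m s; rw [hidxv]; omega)]
  -- total mass of F z
  have hFzsum : ∑ i, (F z i) ^ r = 1 := by
    have h1 : (∑ i, |F z i| ^ r) ^ (1/r) = 1 := hFz1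
    have h2 : ∑ i, |F z i| ^ r = 1 := by
      have h3 := congrArg (· ^ r) h1
      rwa [rpow_r_inv hr (Finset.sum_nonneg fun i _ =>
        Real.rpow_nonneg (abs_nonneg _) r), Real.one_rpow] at h3
    calc ∑ i, (F z i)^r = ∑ i, |F z i|^r := by
          apply Finset.sum_congr rfl; intro i _; rw [abs_of_nonneg (hFz0 i)]
      _ = 1 := h2
  have huniv : (Finset.univ : Finset (Fin k)) = blk k 0 k := by
    ext i; simp only [Finset.mem_univ, mem_blk, true_iff]
    exact ⟨Nat.zero_le _, i.2⟩
  have hsplitzmass : ∑ i ∈ blk k 0 (m d), (F z i)^r + ∑ i ∈ blk k (m d) k, (F z i)^r = 1 := by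
    rw [← sum_blk_split _ (Nat.zero_le _) (le_of_lt hkm), ← huniv, hFzsum]
  have hcardT : ((blk k (m d) k).card : ℝ) = (k:ℝ) - (m d : ℝ) := by
    rw [card_blk le_rfl]
    push_cast [Nat.cast_sub (le_of_lt hkm)]
    ring
  have hTmass : ∑ i ∈ blk k (m d) k, (F z i)^r = c ^ r * ((k:ℝ) - (m d:ℝ)) := by
    calc ∑ i ∈ blk k (m d) k, (F z i)^r = ∑ _i ∈ blk k (m d) k, c ^ r := by
          apply Finset.sum_congr rfl; intro i hi; rw [hcconst i hi]
      _ = ((blk k (m d) k).card : ℝ) * c ^ r := by rw [Finset.sum_const, nsmul_eq_mul]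
      _ = c ^ r * ((k:ℝ) - (m d:ℝ)) := by rw [hcardT]; ring
  set M : ℝ := ∑ i ∈ blk k 0 (m d), (F z i)^r with hM_def
  have hM0 : 0 ≤ M := Finset.sum_nonneg fun i _ => Real.rpow_nonneg (hFz0 i) r
  have hMc : M + c^r * ((k:ℝ) - (m d:ℝ)) = 1 := by rw [hM_def, ← hTmass]; exact hsplitzmass
  -- G and lam
  have hamd2 : 2 * m d ≤ k :=
    le_trans (mul_le_mul_left
      (le_trans (by omega : 2 ≤ a) (Nat.le_mul_of_pos_left a (by omega))) (m d)) gapk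
  have hKmd : (k:ℝ)/2 ≤ (k:ℝ) - (m d:ℝ) := by
    have h1 : (2:ℝ) * (m d:ℝ) ≤ (k:ℝ) := by exact_mod_cast hamd2
    linarith only [h1]
  have hcr0 : 0 ≤ c^r := Real.rpow_nonneg hc0 r
  have hcrK : c^r * (k:ℝ) ≤ 2 := by
    have h1 : c^r * ((k:ℝ) - (m d:ℝ)) ≤ 1 := by linarith only [hMc, hM0]
    have h2 := mul_le_mul_of_nonneg_left hKmd hcr0
    have h3 : c^r * ((k:ℝ)/2) = c^r * (k:ℝ)/2 := by ring
    linarith only [h1, h2, h3]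
  set G : ℝ := c * (k:ℝ)^(1/r) with hG_def
  have hG0 : 0 ≤ G := mul_nonneg hc0 (Real.rpow_nonneg hK0.le _)
  have hG2 : G ≤ 2 := by
    have h1 : G = (c^r * (k:ℝ))^(1/r) := by
      rw [hG_def, Real.mul_rpow hcr0 hK0.le, rpow_inv_r hr hc0]
    rw [h1]
    calc (c^r*(k:ℝ))^(1/r) ≤ (2:ℝ)^(1/r) :=
          Real.rpow_le_rpow (by positivity) hcrK hir0.le
      _ ≤ (2:ℝ)^(1:ℝ) := Real.rpow_le_rpow_of_exponent_le one_le_two hir1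
      _ = 2 := Real.rpow_one 2
  set lam : ℝ := (((a:ℝ)*(a:ℝ))⁻¹) ^ (1/r) with hlam_def
  have hlam0 : 0 ≤ lam := Real.rpow_nonneg (by positivity) _
  have hlam_le : lam ≤ (ε/32)^2 := by
    have hlam_eq : lam = ((a:ℝ)^(1/r) * (a:ℝ)^(1/r))⁻¹ := by
      rw [hlam_def, Real.inv_rpow (by positivity), Real.mul_rpow hA0.le hA0.le]
    have h32 : (32/ε : ℝ) ≤ (a:ℝ)^(1/r) := by linarith [haRr]
    have h320 : (0:ℝ) < 32/ε := by positivity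
    have key : (32/ε)*(32/ε) ≤ (a:ℝ)^(1/r)*(a:ℝ)^(1/r) :=
      mul_le_mul h32 h32 h320.le (by positivity)
    have h2 : ((a:ℝ)^(1/r)*(a:ℝ)^(1/r))⁻¹ ≤ ((32/ε)*(32/ε))⁻¹ :=
      inv_anti₀ (by positivity) key
    rw [hlam_eq]
    calc ((a:ℝ)^(1/r)*(a:ℝ)^(1/r))⁻¹ ≤ ((32/ε)*(32/ε))⁻¹ := h2
      _ = (ε/32)^2 := by field_simp
  have hlam256 : lam ≤ 1/256 := by
    have h1 : (ε/32:ℝ)^2 ≤ (1/16:ℝ)^2 :=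
      pow_le_pow_left₀ (by positivity) (by linarith only [hε2]) 2
    have h2 : ((1:ℝ)/16)^2 = 1/256 := by norm_num
    linarith only [hlam_le, h1, h2]
  have hlam_step : ∀ p q : ℕ, a*a*p ≤ q → ((p:ℕ):ℝ)^(1/r) ≤ lam * (q:ℝ)^(1/r) := by
    intro p q hpq
    have hq0 : (0:ℝ) ≤ (q:ℝ) := Nat.cast_nonneg q
    have h1 : (p:ℝ) ≤ ((a:ℝ)*(a:ℝ))⁻¹ * (q:ℝ) := by
      rw [inv_mul_eq_div, le_div_iff₀ (by positivity)]
      have h2 : ((a*a*p : ℕ):ℝ) ≤ (q:ℝ) := by exact_mod_cast hpq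
      push_cast at h2
      linarith only [h2]
    calc (p:ℝ)^(1/r) ≤ (((a:ℝ)*(a:ℝ))⁻¹ * (q:ℝ))^(1/r) :=
          Real.rpow_le_rpow (Nat.cast_nonneg p) h1 hir0.le
      _ = lam * (q:ℝ)^(1/r) := by
          rw [Real.mul_rpow (by positivity) hq0, hlam_def]
  -- local errors
  set α : ℕ → ℝ := fun s => ∑ i ∈ blk k (a * m (s-1)) (m s), |D i| ^ r with hα_def
  set β : ℕ → ℝ := fun s => ∑ i ∈ blk k (m s) (a * m s), |D i| ^ r with hβ_def
  have hα0 : ∀ s, 0 ≤ α s := fun s => Finset.sum_nonneg fun i _ => hDabs i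
  have hβ0 : ∀ s, 0 ≤ β s := fun s => Finset.sum_nonneg fun i _ => hDabs i
  have hαval : ∀ s, 1 ≤ s → s ≤ d →
      α s = |b s - b' s|^r * ((m s : ℝ) - (a:ℝ)*((m (s-1):ℕ):ℝ)) := by
    intro s h1 h2
    have hsub : a * m (s-1) ≤ m s := gapd' s h1 h2
    have hcard : ((blk k (a*m (s-1)) (m s)).card : ℝ) = (m s:ℝ) - (a:ℝ)*((m (s-1):ℕ):ℝ) := by
      rw [card_blk (le_of_lt (hmsk s h2))]
      push_cast [Nat.cast_sub hsub]
      ring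
    calc α s = ∑ _i ∈ blk k (a*m (s-1)) (m s), |b s - b' s| ^ r := by
          apply Finset.sum_congr rfl
          intro i hi
          rw [mem_blk] at hi
          have hFzi : F z i = b s := by
            apply hbconst s h1 h2 i
            rw [mem_blk]
            exact ⟨le_trans (Nat.le_mul_of_pos_left _ (by omega)) hi.1, hi.2⟩
          have hFyi : F y i = b' s := by
            apply hb'const s h1 h2 i
            rw [mem_blk]
            exact ⟨hi.1, lt_of_lt_of_le hi.2 (Nat.le_mul_of_pos_left _ (by omega))⟩
          show |D i| ^ r = _
          rw [hD_def]
          simp only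
          rw [hFzi, hFyi]
      _ = |b s - b' s|^r * ((m s : ℝ) - (a:ℝ)*((m (s-1):ℕ):ℝ)) := by
          rw [Finset.sum_const, nsmul_eq_mul, hcard]; ring
  have hβval : ∀ s, 1 ≤ s → s ≤ d →
      β s = |(if s = d then c else b (s+1)) - b' s|^r * ((a:ℝ)*(m s:ℝ) - (m s:ℝ)) := by
    intro s h1 h2
    have hsub : m s ≤ a * m s := Nat.le_mul_of_pos_left _ (by omega)
    have hcard : ((blk k (m s) (a * m s)).card : ℝ) = (a:ℝ)*(m s:ℝ) - (m s:ℝ) := by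
      rw [card_blk (hamsk s h2)]
      push_cast [Nat.cast_sub hsub]
      ring
    calc β s = ∑ _i ∈ blk k (m s) (a * m s), |(if s = d then c else b (s+1)) - b' s| ^ r := by
          apply Finset.sum_congr rfl
          intro i hi
          rw [mem_blk] at hi
          have hFyi : F y i = b' s := by
            apply hb'const s h1 h2 i
            rw [mem_blk]
            exact ⟨le_trans (gapd' s h1 h2) hi.1, hi.2⟩
          by_cases hsd : s = d
          · have hFzi : F z i = c := by
              apply hcconst i
              rw [mem_blk]
              subst hsd
              exact ⟨hi.1, i.2⟩
            rw [if_pos hsd]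
            show |D i| ^ r = _
            rw [hD_def]; simp only
            rw [hFzi, hFyi]
          · have hs1d : s + 1 ≤ d := by omega
            have hFzi : F z i = b (s+1) := by
              apply hbconst (s+1) (by omega) hs1d i
              rw [mem_blk]
              constructor
              · show m (s+1-1) ≤ i.1
                rw [show s+1-1 = s by omega]
                exact hi.1
              · calc i.1 < a * m s := hi.2
                  _ ≤ a * a * m s := mul_le_mul_left (Nat.le_mul_of_pos_left a (by omega)) _
                  _ ≤ m (s+1) := by
                      have := gapd (s+1) (by omega) hs1d
                      rwa [show s+1-1 = s by omega] at this
            rw [if_neg hsd]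
            show |D i| ^ r = _
            rw [hD_def]; simp only
            rw [hFzi, hFyi]
      _ = _ := by rw [Finset.sum_const, nsmul_eq_mul, hcard]; ring
  -- the chain quantities
  set g : ℕ → ℝ := fun s => if 1 ≤ s ∧ s ≤ d then b s * ((m s:ℕ):ℝ) ^ (1/r) else G with hg_def
  have hg0 : ∀ s, 0 ≤ g s := by
    intro s
    rw [hg_def]
    dsimp only
    split
    · exact mul_nonneg (hb0 _) (Real.rpow_nonneg (Nat.cast_nonneg _) _)
    · exact hG0
  have hkey : ∀ s, 1 ≤ s → s ≤ d →
      g s ≤ lam * g (s+1) + ((18/17) * (α s) ^ (1/r) + (ε/16) * (β s) ^ (1/r)) := by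
    intro s h1 h2
    have hmsR : (0:ℝ) < ((m s:ℕ):ℝ) := by exact_mod_cast hmspos s h1 h2
    set msr : ℝ := ((m s:ℕ):ℝ) ^ (1/r) with hmsr_def
    have hmsr0 : 0 ≤ msr := Real.rpow_nonneg hmsR.le _
    set nxt : ℝ := if s = d then c else b (s+1) with hnxt_def
    have hnxt0 : 0 ≤ nxt := by rw [hnxt_def]; split; exacts [hc0, hb0 _]
    set δ1 : ℝ := |b s - b' s| with hδ1_def
    set δ2 : ℝ := |nxt - b' s| with hδ2_def
    have hδ10 : 0 ≤ δ1 := abs_nonneg _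
    have hδ20 : 0 ≤ δ2 := abs_nonneg _
    -- value chain
    have f1 : b s ≤ b' s + δ1 := by
      have h0 := le_abs_self (b s - b' s); rw [← hδ1_def] at h0; linarith only [h0]
    have f2 : b' s ≤ nxt + δ2 := by
      have h0 := neg_abs_le (nxt - b' s); rw [← hδ2_def] at h0; linarith only [h0]
    -- bound 1
    have bound1 : δ1 * msr ≤ (18/17) * (α s) ^ (1/r) := by
      set cA : ℝ := (m s : ℝ) - (a:ℝ)*((m (s-1):ℕ):ℝ) with hcA_def
      have h18 : 18 * (a * m (s-1)) ≤ m s := by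
        calc 18 * (a * m (s-1)) = (18 * a) * m (s-1) := by ring
          _ ≤ (a * a) * m (s-1) := mul_le_mul_left (mul_le_mul_left ha18n a) _
          _ ≤ m s := gapd s h1 h2
      have h18R : 18 * ((a:ℝ) * ((m (s-1):ℕ):ℝ)) ≤ ((m s:ℕ):ℝ) := by
        have h0 : ((18 * (a * m (s-1)) : ℕ):ℝ) ≤ ((m s:ℕ):ℝ) := by exact_mod_cast h18
        push_cast at h0
        linarith only [h0]
      have hcA0 : 0 ≤ cA := by
        rw [hcA_def]
        have h0 : (0:ℝ) ≤ (a:ℝ)*((m (s-1):ℕ):ℝ) := by positivity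
        linarith only [h0, h18R]
      have hαr : (α s) ^ (1/r) = δ1 * cA ^ (1/r) := by
        rw [hαval s h1 h2, ← hcA_def, ← hδ1_def,
          Real.mul_rpow (Real.rpow_nonneg hδ10 r) hcA0, rpow_inv_r hr hδ10]
      have hfrac : ((m s:ℕ):ℝ) ≤ (18/17 : ℝ)^r * cA := by
        have hp1 : (18/17:ℝ) ≤ (18/17:ℝ)^r := by
          calc (18/17:ℝ) = (18/17:ℝ)^(1:ℝ) := (Real.rpow_one _).symm
            _ ≤ (18/17:ℝ)^r := Real.rpow_le_rpow_of_exponent_le (by norm_num) hr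
        have h2' : ((m s:ℕ):ℝ) ≤ (18/17) * cA := by rw [hcA_def]; linarith only [h18R]
        calc ((m s:ℕ):ℝ) ≤ (18/17) * cA := h2'
          _ ≤ (18/17:ℝ)^r * cA := mul_le_mul_of_nonneg_right hp1 hcA0
      have hmsr_le : msr ≤ (18/17) * cA ^ (1/r) := by
        rw [hmsr_def]
        calc ((m s:ℕ):ℝ)^(1/r) ≤ ((18/17:ℝ)^r * cA)^(1/r) :=
              Real.rpow_le_rpow hmsR.le hfrac hir0.le
          _ = (18/17) * cA ^ (1/r) := by
              rw [Real.mul_rpow (Real.rpow_nonneg (by norm_num) r) hcA0,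
                rpow_inv_r hr (by norm_num)]
      calc δ1 * msr ≤ δ1 * ((18/17) * cA ^ (1/r)) :=
            mul_le_mul_of_nonneg_left hmsr_le hδ10
        _ = (18/17) * (δ1 * cA ^ (1/r)) := by ring
        _ = (18/17) * (α s) ^ (1/r) := by rw [hαr]
    -- bound 2
    have bound2 : δ2 * msr ≤ (ε/16) * (β s) ^ (1/r) := by
      set cB : ℝ := (a:ℝ)*((m s:ℕ):ℝ) - ((m s:ℕ):ℝ) with hcB_def
      have hcB0 : 0 ≤ cB := by
        rw [hcB_def]
        have h0 := mul_le_mul_of_nonneg_right hA1 hmsR.le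
        rw [one_mul] at h0
        linarith only [h0]
      have hβr : (β s) ^ (1/r) = δ2 * cB ^ (1/r) := by
        rw [hβval s h1 h2, ← hcB_def, ← hnxt_def, ← hδ2_def,
          Real.mul_rpow (Real.rpow_nonneg hδ20 r) hcB0, rpow_inv_r hr hδ20]
      have h16e : (0:ℝ) < 16/ε := by positivity
      have h16e1 : (1:ℝ) ≤ 16/ε := by rw [le_div_iff₀ hε]; linarith only [hε, hε2]
      have h16r1 : (1:ℝ) ≤ (16/ε)^r := by
        calc (1:ℝ) = (1:ℝ)^r := (Real.one_rpow r).symm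
          _ ≤ (16/ε)^r := Real.rpow_le_rpow (by norm_num) h16e1 hr0.le
      have hA16 : (16/ε:ℝ)^r + 1 ≤ (a:ℝ) := by
        have e1 : (2*(16/ε) : ℝ) ≤ 32/ε + 2 := by
          have h0 : (2*(16/ε) : ℝ) = 32/ε := by ring
          rw [h0]
          linarith only []
        have e2 : ((2*(16/ε):ℝ))^r ≤ (32/ε+2)^r :=
          Real.rpow_le_rpow (by positivity) e1 hr0.le
        have e3 : ((2*(16/ε):ℝ))^r = 2^r * (16/ε)^r :=
          Real.mul_rpow (by norm_num) h16e.le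
        have e4 : (2:ℝ) ≤ 2^r := by
          calc (2:ℝ) = (2:ℝ)^(1:ℝ) := (Real.rpow_one _).symm
            _ ≤ (2:ℝ)^r := Real.rpow_le_rpow_of_exponent_le one_le_two hr
        have e5 : (2:ℝ) * (16/ε)^r ≤ 2^r * (16/ε)^r :=
          mul_le_mul_of_nonneg_right e4 (by linarith only [h16r1])
        linarith only [haR, e2, e3, e5, h16r1]
      have hfrac : ((m s:ℕ):ℝ) ≤ (ε/16:ℝ)^r * cB := by
        have hei : (ε/16:ℝ) = ((16/ε:ℝ))⁻¹ := by field_simp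
        have her : (ε/16:ℝ)^r = (((16/ε:ℝ))^r)⁻¹ := by
          rw [hei, Real.inv_rpow h16e.le]
        have hcBval : cB = ((a:ℝ) - 1)*((m s:ℕ):ℝ) := by rw [hcB_def]; ring
        have h1' : (1:ℝ) ≤ (ε/16:ℝ)^r * ((a:ℝ)-1) := by
          rw [her]
          rw [inv_mul_eq_div, le_div_iff₀ (by positivity)]
          linarith only [hA16]
        rw [hcBval]
        have h2' := le_mul_of_one_le_left hmsR.le h1'
        rw [mul_assoc] at h2'
        exact h2'
      have hmsr_le : msr ≤ (ε/16) * cB ^ (1/r) := by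
        rw [hmsr_def]
        calc ((m s:ℕ):ℝ)^(1/r) ≤ ((ε/16:ℝ)^r * cB)^(1/r) :=
              Real.rpow_le_rpow hmsR.le hfrac hir0.le
          _ = (ε/16) * cB ^ (1/r) := by
              rw [Real.mul_rpow (Real.rpow_nonneg (by positivity) r) hcB0,
                rpow_inv_r hr (by positivity)]
      calc δ2 * msr ≤ δ2 * ((ε/16) * cB ^ (1/r)) :=
            mul_le_mul_of_nonneg_left hmsr_le hδ20
        _ = (ε/16) * (δ2 * cB ^ (1/r)) := by ring
        _ = (ε/16) * (β s) ^ (1/r) := by rw [hβr]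
    -- bound 3
    have bound3 : nxt * msr ≤ lam * g (s+1) := by
      by_cases hsd : s = d
      · have hg1 : g (s+1) = G := by
          rw [hg_def]; dsimp only; rw [if_neg (by omega)]
        have hstep1 : msr ≤ lam * ((k:ℕ):ℝ)^(1/r) := by
          rw [hmsr_def]
          apply hlam_step
          rw [hsd]
          exact gapk
        rw [hg1, hnxt_def, if_pos hsd, hG_def]
        calc c * msr ≤ c * (lam * ((k:ℕ):ℝ)^(1/r)) := mul_le_mul_of_nonneg_left hstep1 hc0
          _ = lam * (c * ((k:ℕ):ℝ)^(1/r)) := by ring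
      · have hs1d : s + 1 ≤ d := by omega
        have hg1 : g (s+1) = b (s+1) * ((m (s+1):ℕ):ℝ)^(1/r) := by
          rw [hg_def]; dsimp only; rw [if_pos ⟨by omega, hs1d⟩]
        have hstep1 : msr ≤ lam * ((m (s+1):ℕ):ℝ)^(1/r) := by
          rw [hmsr_def]
          apply hlam_step
          have := gapd (s+1) (by omega) hs1d
          rwa [show s+1-1 = s by omega] at this
        rw [hg1, hnxt_def, if_neg hsd]
        calc b (s+1) * msr ≤ b (s+1) * (lam * ((m (s+1):ℕ):ℝ)^(1/r)) :=
              mul_le_mul_of_nonneg_left hstep1 (hb0 _)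
          _ = lam * (b (s+1) * ((m (s+1):ℕ):ℝ)^(1/r)) := by ring
    -- combine
    have hgs : g s = b s * msr := by
      rw [hg_def]; dsimp only; rw [if_pos ⟨h1, h2⟩, hmsr_def]
    have hbs : b s * msr ≤ nxt * msr + δ1 * msr + δ2 * msr := by
      have hb_le : b s ≤ nxt + δ1 + δ2 := by linarith
      have h0 := mul_le_mul_of_nonneg_right hb_le hmsr0
      rw [add_mul, add_mul] at h0
      linarith only [h0]
    rw [hgs]
    linarith only [hbs, bound1, bound2, bound3]
  -- summed quantities
  set HH : ℕ → ℝ := fun s => (18/17) * (α s)^(1/r) + (ε/16) * (β s)^(1/r) with hHH_def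
  have hHH0 : ∀ s, 0 ≤ HH s := by
    intro s
    rw [hHH_def]
    have h1 := Real.rpow_nonneg (hα0 s) (1/r)
    have h2 := Real.rpow_nonneg (hβ0 s) (1/r)
    positivity
  set U : ℝ := ∑ s ∈ Finset.Icc 1 d, (g s)^r with hU_def
  have hU0 : 0 ≤ U := Finset.sum_nonneg fun s _ => Real.rpow_nonneg (hg0 s) r
  set ν : ℝ := U ^ (1/r) with hν_def
  have hν0 : 0 ≤ ν := Real.rpow_nonneg hU0 _
  have hshift : ∑ s ∈ Finset.Icc 1 d, (g (s+1))^r ≤ U + G^r := by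
    have h1 : ∑ s ∈ Finset.Icc 1 d, (g (s+1))^r = ∑ s ∈ Finset.Icc 2 (d+1), (g s)^r := by
      rw [show Finset.Icc 2 (d+1) = (Finset.Icc 1 d).map (addRightEmbedding 1) from by
            rw [Finset.map_add_right_Icc], Finset.sum_map]
      simp [addRightEmbedding_apply]
    rw [h1]
    have h2 : Finset.Icc 2 (d+1) = insert (d+1) (Finset.Icc 2 d) := by
      ext t; simp only [Finset.mem_Icc, Finset.mem_insert]; omega
    rw [h2, Finset.sum_insert (by simp only [Finset.mem_Icc]; omega)]
    have h3 : g (d+1) = G := by rw [hg_def]; dsimp only; rw [if_neg (by omega)]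
    have h4 : ∑ s ∈ Finset.Icc 2 d, (g s)^r ≤ U := by
      rw [hU_def]
      apply Finset.sum_le_sum_of_subset_of_nonneg
      · intro t ht; simp only [Finset.mem_Icc] at *; omega
      · intro t _ _; exact Real.rpow_nonneg (hg0 t) r
    rw [h3]
    linarith only [h4]
  -- Minkowski applications
  have hstep1 : U ≤ ∑ s ∈ Finset.Icc 1 d, (lam * g (s+1) + HH s)^r := by
    rw [hU_def]
    apply Finset.sum_le_sum
    intro s hs
    rw [Finset.mem_Icc] at hs
    exact Real.rpow_le_rpow (hg0 s) (hkey s hs.1 hs.2) hr0.le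
  have hmink1 : (∑ s ∈ Finset.Icc 1 d, (lam * g (s+1) + HH s)^r) ^ (1/r) ≤
      lam * (ν + G) + (∑ s ∈ Finset.Icc 1 d, (HH s)^r) ^ (1/r) := by
    have hLp := Real.Lp_add_le (Finset.Icc 1 d) (fun s => lam * g (s+1)) HH hr
    have he1 : ∑ s ∈ Finset.Icc 1 d, (lam * g (s+1) + HH s)^r
        = ∑ s ∈ Finset.Icc 1 d, |lam * g (s+1) + HH s|^r := by
      apply Finset.sum_congr rfl
      intro s _
      rw [abs_of_nonneg (add_nonneg (mul_nonneg hlam0 (hg0 _)) (hHH0 s))]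
    have he2 : ∑ s ∈ Finset.Icc 1 d, |lam * g (s+1)|^r
        = lam^r * ∑ s ∈ Finset.Icc 1 d, (g (s+1))^r := by
      rw [Finset.mul_sum]
      apply Finset.sum_congr rfl
      intro s _
      rw [abs_of_nonneg (mul_nonneg hlam0 (hg0 _)), Real.mul_rpow hlam0 (hg0 _)]
    have he3 : ∑ s ∈ Finset.Icc 1 d, |HH s|^r = ∑ s ∈ Finset.Icc 1 d, (HH s)^r := by
      apply Finset.sum_congr rfl
      intro s _
      rw [abs_of_nonneg (hHH0 s)]
    rw [he1] at *
    calc (∑ s ∈ Finset.Icc 1 d, |lam * g (s+1) + HH s|^r) ^ (1/r)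
        ≤ (∑ s ∈ Finset.Icc 1 d, |lam * g (s+1)|^r)^(1/r)
          + (∑ s ∈ Finset.Icc 1 d, |HH s|^r)^(1/r) := hLp
      _ ≤ lam * (ν + G) + (∑ s ∈ Finset.Icc 1 d, (HH s)^r) ^ (1/r) := by
          apply add_le_add _ (le_of_eq (by rw [he3]))
          rw [he2]
          have hs0 : 0 ≤ ∑ s ∈ Finset.Icc 1 d, (g (s+1))^r :=
            Finset.sum_nonneg fun s _ => Real.rpow_nonneg (hg0 _) r
          calc (lam^r * ∑ s ∈ Finset.Icc 1 d, (g (s+1))^r)^(1/r)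
              = lam * (∑ s ∈ Finset.Icc 1 d, (g (s+1))^r)^(1/r) := by
                rw [Real.mul_rpow (Real.rpow_nonneg hlam0 r) hs0, rpow_inv_r hr hlam0]
            _ ≤ lam * (U + G^r)^(1/r) :=
                mul_le_mul_of_nonneg_left (Real.rpow_le_rpow hs0 hshift hir0.le) hlam0
            _ ≤ lam * (ν + G) := by
                apply mul_le_mul_of_nonneg_left _ hlam0
                calc (U + G^r)^(1/r) ≤ U^(1/r) + (G^r)^(1/r) :=
                     rpow_subadd hr hU0 (Real.rpow_nonneg hG0 r)
                  _ = ν + G := by rw [← hν_def, rpow_inv_r hr hG0]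
  -- bound on the error sums
  have hpartition : ∀ f : Fin k → ℝ, (∀ i, 0 ≤ f i) →
      ∑ s ∈ Finset.Icc 1 d, (∑ i ∈ blk k (a * m (s-1)) (a * m s), f i) ≤ ∑ i, f i := by
    intro f hf
    set mc : ℕ → ℕ := fun s => a * m (min s d) with hmc_def
    have hmcmono : ∀ s, mc s ≤ mc (s+1) := by
      intro s
      exact Nat.mul_le_mul_left a (hmm _ _ (by omega) (by omega))
    have heq : ∑ s ∈ Finset.Icc 1 d, (∑ i ∈ blk k (a * m (s-1)) (a * m s), f i)
        = ∑ s ∈ Finset.Icc 1 d, (∑ i ∈ blk k (mc (s-1)) (mc s), f i) := by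
      apply Finset.sum_congr rfl
      intro s hs
      rw [Finset.mem_Icc] at hs
      rw [show mc (s-1) = a * m (s-1) from by rw [hmc_def]; simp only; congr 2; omega,
        show mc s = a * m s from by rw [hmc_def]; simp only; congr 2; omega]
    rw [heq, sum_blocks f mc hmcmono d]
    apply Finset.sum_le_sum_of_subset_of_nonneg (Finset.subset_univ _)
    intro i _ _
    exact hf i
  have hαsum : ∑ s ∈ Finset.Icc 1 d, α s ≤ (ε/8)^r := by
    calc ∑ s ∈ Finset.Icc 1 d, α s
        ≤ ∑ s ∈ Finset.Icc 1 d, (∑ i ∈ blk k (a * m (s-1)) (a * m s), |D i|^r) := by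
          apply Finset.sum_le_sum
          intro s hs
          rw [Finset.mem_Icc] at hs
          rw [hα_def]
          apply Finset.sum_le_sum_of_subset_of_nonneg
          · intro i hi
            rw [mem_blk] at *
            have := hamsk s hs.2
            have h0 : m s ≤ a * m s := Nat.le_mul_of_pos_left _ (by omega)
            omega
          · intro i _ _; exact hDabs i
      _ ≤ ∑ i, |D i|^r := hpartition _ hDabs
      _ ≤ (ε/8)^r := hDsum
  have hβsum : ∑ s ∈ Finset.Icc 1 d, β s ≤ (ε/8)^r := by
    calc ∑ s ∈ Finset.Icc 1 d, β s
        ≤ ∑ s ∈ Finset.Icc 1 d, (∑ i ∈ blk k (a * m (s-1)) (a * m s), |D i|^r) := by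
          apply Finset.sum_le_sum
          intro s hs
          rw [Finset.mem_Icc] at hs
          rw [hβ_def]
          apply Finset.sum_le_sum_of_subset_of_nonneg
          · intro i hi
            rw [mem_blk] at *
            have := gapd' s hs.1 hs.2
            omega
          · intro i _ _; exact hDabs i
      _ ≤ ∑ i, |D i|^r := hpartition _ hDabs
      _ ≤ (ε/8)^r := hDsum
  -- H sum bound
  have hHsum : (∑ s ∈ Finset.Icc 1 d, (HH s)^r) ^ (1/r) ≤ (18/17)*(ε/8) + (ε/16)*(ε/8) := by
    have hLp := Real.Lp_add_le (Finset.Icc 1 d)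
      (fun s => (18/17) * (α s)^(1/r)) (fun s => (ε/16) * (β s)^(1/r)) hr
    have he1 : ∑ s ∈ Finset.Icc 1 d, (HH s)^r
        = ∑ s ∈ Finset.Icc 1 d, |(18/17) * (α s)^(1/r) + (ε/16) * (β s)^(1/r)|^r := by
      apply Finset.sum_congr rfl
      intro s _
      rw [hHH_def]
      simp only
      rw [abs_of_nonneg]
      have h1 := Real.rpow_nonneg (hα0 s) (1/r)
      have h2 := Real.rpow_nonneg (hβ0 s) (1/r)
      positivity
    have he2 : ∑ s ∈ Finset.Icc 1 d, |(18/17) * (α s)^(1/r)|^r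
        = (18/17:ℝ)^r * ∑ s ∈ Finset.Icc 1 d, α s := by
      rw [Finset.mul_sum]
      apply Finset.sum_congr rfl
      intro s _
      have h1 := Real.rpow_nonneg (hα0 s) (1/r)
      rw [abs_of_nonneg (by positivity), Real.mul_rpow (by norm_num) h1,
        rpow_r_inv hr (hα0 s)]
    have he3 : ∑ s ∈ Finset.Icc 1 d, |(ε/16) * (β s)^(1/r)|^r
        = (ε/16:ℝ)^r * ∑ s ∈ Finset.Icc 1 d, β s := by
      rw [Finset.mul_sum]
      apply Finset.sum_congr rfl
      intro s _
      have h1 := Real.rpow_nonneg (hβ0 s) (1/r)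
      rw [abs_of_nonneg (by positivity), Real.mul_rpow (by positivity) h1,
        rpow_r_inv hr (hβ0 s)]
    have hα0' : 0 ≤ ∑ s ∈ Finset.Icc 1 d, α s := Finset.sum_nonneg fun s _ => hα0 s
    have hβ0' : 0 ≤ ∑ s ∈ Finset.Icc 1 d, β s := Finset.sum_nonneg fun s _ => hβ0 s
    calc (∑ s ∈ Finset.Icc 1 d, (HH s)^r) ^ (1/r)
        ≤ (∑ s ∈ Finset.Icc 1 d, |(18/17) * (α s)^(1/r)|^r)^(1/r)
          + (∑ s ∈ Finset.Icc 1 d, |(ε/16) * (β s)^(1/r)|^r)^(1/r) := by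
          rw [he1]; exact hLp
      _ ≤ (18/17)*(ε/8) + (ε/16)*(ε/8) := by
          apply add_le_add
          · rw [he2]
            calc ((18/17:ℝ)^r * ∑ s ∈ Finset.Icc 1 d, α s)^(1/r)
                = (18/17) * (∑ s ∈ Finset.Icc 1 d, α s)^(1/r) := by
                  rw [Real.mul_rpow (Real.rpow_nonneg (by norm_num) r) hα0',
                    rpow_inv_r hr (by norm_num)]
              _ ≤ (18/17) * (ε/8) := by
                  apply mul_le_mul_of_nonneg_left _ (by norm_num)
                  calc (∑ s ∈ Finset.Icc 1 d, α s)^(1/r) ≤ ((ε/8)^r)^(1/r) :=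
                        Real.rpow_le_rpow hα0' hαsum hir0.le
                    _ = ε/8 := rpow_inv_r hr (by positivity)
          · rw [he3]
            calc ((ε/16:ℝ)^r * ∑ s ∈ Finset.Icc 1 d, β s)^(1/r)
                = (ε/16) * (∑ s ∈ Finset.Icc 1 d, β s)^(1/r) := by
                  rw [Real.mul_rpow (Real.rpow_nonneg (by positivity) r) hβ0',
                    rpow_inv_r hr (by positivity)]
              _ ≤ (ε/16) * (ε/8) := by
                  apply mul_le_mul_of_nonneg_left _ (by positivity)
                  calc (∑ s ∈ Finset.Icc 1 d, β s)^(1/r) ≤ ((ε/8)^r)^(1/r) :=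
                        Real.rpow_le_rpow hβ0' hβsum hir0.le
                    _ = ε/8 := rpow_inv_r hr (by positivity)
  -- the master inequality for ν
  have hν_ineq : ν ≤ lam * (ν + G) + ((18/17)*(ε/8) + (ε/16)*(ε/8)) := by
    calc ν = U^(1/r) := hν_def
      _ ≤ (∑ s ∈ Finset.Icc 1 d, (lam * g (s+1) + HH s)^r)^(1/r) :=
          Real.rpow_le_rpow hU0 hstep1 hir0.le
      _ ≤ lam * (ν + G) + (∑ s ∈ Finset.Icc 1 d, (HH s)^r) ^ (1/r) := hmink1
      _ ≤ lam * (ν + G) + ((18/17)*(ε/8) + (ε/16)*(ε/8)) := by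
          linarith only [hHsum]
  -- M is dominated by U
  have hMU : M ≤ U := by
    have hpart : M = ∑ s ∈ Finset.Icc 1 d, (∑ i ∈ blk k (m (s-1)) (m s), (F z i)^r) := by
      rw [hM_def]
      set mz : ℕ → ℕ := fun s => m (min s d) with hmz_def
      have hmzmono : ∀ s, mz s ≤ mz (s+1) := fun s => hmm _ _ (by omega) (by omega)
      have heq : ∀ s ∈ Finset.Icc 1 d, (∑ i ∈ blk k (m (s-1)) (m s), (F z i)^r)
          = ∑ i ∈ blk k (mz (s-1)) (mz s), (F z i)^r := by
        intro s hs
        rw [Finset.mem_Icc] at hs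
        rw [show mz (s-1) = m (s-1) from by rw [hmz_def]; simp only; congr 1; omega,
          show mz s = m s from by rw [hmz_def]; simp only; congr 1; omega]
      rw [Finset.sum_congr rfl heq, sum_blocks _ mz hmzmono d]
      rw [show mz 0 = 0 from by rw [hmz_def]; simp [hm0],
        show mz d = m d from by rw [hmz_def]; simp]
    rw [hpart, hU_def]
    apply Finset.sum_le_sum
    intro s hs
    rw [Finset.mem_Icc] at hs
    have hconst : ∑ i ∈ blk k (m (s-1)) (m s), (F z i)^r
        = (b s)^r * (((m s:ℕ):ℝ) - ((m (s-1):ℕ):ℝ)) := by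
      have hcard : ((blk k (m (s-1)) (m s)).card : ℝ) = ((m s:ℕ):ℝ) - ((m (s-1):ℕ):ℝ) := by
        rw [card_blk (le_of_lt (hmsk s hs.2))]
        push_cast [Nat.cast_sub (le_of_lt (hmlt s hs.1 hs.2))]
        ring
      calc ∑ i ∈ blk k (m (s-1)) (m s), (F z i)^r
          = ∑ _i ∈ blk k (m (s-1)) (m s), (b s)^r := by
            apply Finset.sum_congr rfl
            intro i hi
            rw [hbconst s hs.1 hs.2 i hi]
        _ = _ := by rw [Finset.sum_const, nsmul_eq_mul, hcard]; ring
    have hgr : (g s)^r = (b s)^r * ((m s:ℕ):ℝ) := by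
      rw [hg_def]
      dsimp only
      rw [if_pos ⟨hs.1, hs.2⟩, Real.mul_rpow (hb0 s) (Real.rpow_nonneg (Nat.cast_nonneg _) _),
        rpow_r_inv hr (Nat.cast_nonneg _)]
    rw [hconst, hgr]
    have hbr0 : 0 ≤ (b s)^r := Real.rpow_nonneg (hb0 s) r
    have hm10 : (0:ℝ) ≤ ((m (s-1):ℕ):ℝ) := Nat.cast_nonneg _
    have := mul_le_mul_of_nonneg_left (show ((m s:ℕ):ℝ) - ((m (s-1):ℕ):ℝ) ≤ ((m s:ℕ):ℝ)
      from by linarith only [hm10]) hbr0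
    linarith only [this]
  have hMν : M^(1/r) ≤ ν := by rw [hν_def]; exact Real.rpow_le_rpow hM0 hMU hir0.le
  -- the diagonal tail quantity
  set lamd : ℝ := (((m d:ℕ):ℝ) * ((k:ℕ):ℝ)⁻¹)^(1/r) with hlamd_def
  have hlamd0 : 0 ≤ lamd := Real.rpow_nonneg (by positivity) _
  have hlamd_le : lamd ≤ lam := by
    rw [hlamd_def, hlam_def]
    apply Real.rpow_le_rpow (by positivity) _ hir0.le
    have hGap : ((a:ℝ)*(a:ℝ)) * ((m d:ℕ):ℝ) ≤ ((k:ℕ):ℝ) := by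
      have h0 : ((a*a*m d : ℕ):ℝ) ≤ ((k:ℕ):ℝ) := by exact_mod_cast gapk
      push_cast at h0
      linarith only [h0]
    rw [← div_eq_mul_inv, ← one_div]
    rw [div_le_div_iff₀ hK0 (by positivity)]
    linarith only [hGap]
  have hKmd0 : (0:ℝ) ≤ (k:ℝ) - ((m d:ℕ):ℝ) := by linarith only [hKmd, hK0.le]
  -- T part
  have hTval : ∑ i ∈ blk k (m d) k, |F z i - κ|^r = |c - κ|^r * ((k:ℝ) - ((m d:ℕ):ℝ)) := by
    calc ∑ i ∈ blk k (m d) k, |F z i - κ|^r = ∑ _i ∈ blk k (m d) k, |c - κ|^r := by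
          apply Finset.sum_congr rfl
          intro i hi
          rw [hcconst i hi]
      _ = _ := by rw [Finset.sum_const, nsmul_eq_mul, hcardT]; ring
  have hM1 : M ≤ 1 := by
    have h0 : 0 ≤ c^r * ((k:ℝ) - ((m d:ℕ):ℝ)) := mul_nonneg hcr0 hKmd0
    linarith only [hMc, h0]
  have hκinv : κ = (((k:ℕ):ℝ)⁻¹)^(1/r) := by
    rw [hκ_def, Real.rpow_neg hK0.le, ← Real.inv_rpow hK0.le]
  have hTbound : (∑ i ∈ blk k (m d) k, |F z i - κ|^r)^(1/r) ≤ M^(1/r) + lamd := by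
    rw [hTval, Real.mul_rpow (Real.rpow_nonneg (abs_nonneg _) r) hKmd0,
      rpow_inv_r hr (abs_nonneg _)]
    set w : ℝ := ((k:ℝ) - ((m d:ℕ):ℝ))^(1/r) with hw_def
    have hw0 : 0 ≤ w := Real.rpow_nonneg hKmd0 _
    have e1 : |c - κ| * w = |c * w - κ * w| := by
      rw [← sub_mul, abs_mul, abs_of_nonneg hw0]
    have e2 : c * w = (1 - M)^(1/r) := by
      have h0 : c^r * ((k:ℝ) - ((m d:ℕ):ℝ)) = 1 - M := by linarith only [hMc]
      calc c * w = (c^r)^(1/r) * w := by rw [rpow_inv_r hr hc0]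
        _ = (c^r * ((k:ℝ) - ((m d:ℕ):ℝ)))^(1/r) := by
            rw [hw_def, ← Real.mul_rpow hcr0 hKmd0]
        _ = (1 - M)^(1/r) := by rw [h0]
    have e3 : κ * w = (((k:ℕ):ℝ)⁻¹ * ((k:ℝ) - ((m d:ℕ):ℝ)))^(1/r) := by
      rw [hκinv, hw_def, ← Real.mul_rpow (by positivity) hKmd0]
    have e4 : |(1-M)^(1/r) - (((k:ℕ):ℝ)⁻¹ * ((k:ℝ) - ((m d:ℕ):ℝ)))^(1/r)|
        ≤ |(1-M) - ((k:ℕ):ℝ)⁻¹ * ((k:ℝ) - ((m d:ℕ):ℝ))|^(1/r) :=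
      abs_rpow_diff hr (by linarith only [hM1]) (by positivity)
    have e5 : (1-M) - ((k:ℕ):ℝ)⁻¹ * ((k:ℝ) - ((m d:ℕ):ℝ))
        = ((m d:ℕ):ℝ)*((k:ℕ):ℝ)⁻¹ - M := by
      field_simp
      ring
    have e6 : |((m d:ℕ):ℝ)*((k:ℕ):ℝ)⁻¹ - M| ≤ M + ((m d:ℕ):ℝ)*((k:ℕ):ℝ)⁻¹ := by
      have h1 : (0:ℝ) ≤ ((m d:ℕ):ℝ)*((k:ℕ):ℝ)⁻¹ := by positivity
      rw [abs_le]
      constructor <;> linarith only [hM0, h1]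
    have e7 : |((m d:ℕ):ℝ)*((k:ℕ):ℝ)⁻¹ - M|^(1/r) ≤ (M + ((m d:ℕ):ℝ)*((k:ℕ):ℝ)⁻¹)^(1/r) :=
      Real.rpow_le_rpow (abs_nonneg _) e6 hir0.le
    have e8 : (M + ((m d:ℕ):ℝ)*((k:ℕ):ℝ)⁻¹)^(1/r) ≤ M^(1/r) + lamd := by
      rw [hlamd_def]
      exact rpow_subadd hr hM0 (by positivity)
    calc |c - κ| * w = |c * w - κ * w| := e1
      _ = |(1-M)^(1/r) - (((k:ℕ):ℝ)⁻¹ * ((k:ℝ) - ((m d:ℕ):ℝ)))^(1/r)| := by rw [e2, e3]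
      _ ≤ |(1-M) - ((k:ℕ):ℝ)⁻¹ * ((k:ℝ) - ((m d:ℕ):ℝ))|^(1/r) := e4
      _ = |((m d:ℕ):ℝ)*((k:ℕ):ℝ)⁻¹ - M|^(1/r) := by rw [e5]
      _ ≤ (M + ((m d:ℕ):ℝ)*((k:ℕ):ℝ)⁻¹)^(1/r) := e7
      _ ≤ M^(1/r) + lamd := e8
  -- S part
  have hSbound : (∑ i ∈ blk k 0 (m d), |F z i - κ|^r)^(1/r) ≤ M^(1/r) + lamd := by
    have hLp := Real.Lp_add_le (blk k 0 (m d)) (F z) (fun _ => -κ) hr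
    have he1 : ∑ i ∈ blk k 0 (m d), |F z i - κ|^r
        = ∑ i ∈ blk k 0 (m d), |F z i + -κ|^r := by
      apply Finset.sum_congr rfl
      intro i _
      rw [show F z i + -κ = F z i - κ by ring]
    have he2 : ∑ i ∈ blk k 0 (m d), |F z i|^r = M := by
      rw [hM_def]
      apply Finset.sum_congr rfl
      intro i _
      rw [abs_of_nonneg (hFz0 i)]
    have he3 : ∑ _i ∈ blk k 0 (m d), |-κ|^r = ((m d:ℕ):ℝ) * ((k:ℕ):ℝ)⁻¹ := by
      rw [Finset.sum_const, nsmul_eq_mul, abs_neg, abs_of_nonneg hκ0, hκr,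
        card_blk (le_of_lt hkm)]
      simp
    calc (∑ i ∈ blk k 0 (m d), |F z i - κ|^r)^(1/r)
        = (∑ i ∈ blk k 0 (m d), |F z i + -κ|^r)^(1/r) := by rw [he1]
      _ ≤ (∑ i ∈ blk k 0 (m d), |F z i|^r)^(1/r)
          + (∑ _i ∈ blk k 0 (m d), |-κ|^r)^(1/r) := hLp
      _ = M^(1/r) + (((m d:ℕ):ℝ) * ((k:ℕ):ℝ)⁻¹)^(1/r) := by rw [he2, he3]
      _ = M^(1/r) + lamd := by rw [hlamd_def]
  -- assemble
  have hS0 : 0 ≤ ∑ i ∈ blk k 0 (m d), |F z i - κ|^r :=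
    Finset.sum_nonneg fun i _ => Real.rpow_nonneg (abs_nonneg _) r
  have hT0 : 0 ≤ ∑ i ∈ blk k (m d) k, |F z i - κ|^r :=
    Finset.sum_nonneg fun i _ => Real.rpow_nonneg (abs_nonneg _) r
  have hfinal1 : lrNorm r (F z - fun _ => κ) ≤ 2*ν + 2*lam := by
    have hgoal : lrNorm r (F z - fun _ => κ) = (∑ i, |F z i - κ|^r)^(1/r) := rfl
    have hTS : ∑ i, |F z i - κ|^r
        = (∑ i ∈ blk k 0 (m d), |F z i - κ|^r) + ∑ i ∈ blk k (m d) k, |F z i - κ|^r := by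
      calc ∑ i, |F z i - κ|^r = ∑ i ∈ blk k 0 k, |F z i - κ|^r := by rw [← huniv]
        _ = _ := sum_blk_split _ (Nat.zero_le _) (le_of_lt hkm)
    rw [hgoal, hTS]
    calc ((∑ i ∈ blk k 0 (m d), |F z i - κ|^r) + ∑ i ∈ blk k (m d) k, |F z i - κ|^r)^(1/r)
        ≤ (∑ i ∈ blk k 0 (m d), |F z i - κ|^r)^(1/r)
          + (∑ i ∈ blk k (m d) k, |F z i - κ|^r)^(1/r) := rpow_subadd hr hS0 hT0
      _ ≤ (M^(1/r) + lamd) + (M^(1/r) + lamd) := add_le_add hSbound hTbound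
      _ ≤ 2*ν + 2*lam := by linarith only [hMν, hlamd_le]
  -- final numerics
  have hG2' : lam * G ≤ 2 * lam := by
    have h0 := mul_le_mul_of_nonneg_left hG2 hlam0
    linarith only [h0]
  rw [mul_add] at hν_ineq
  have hεsq : ε*ε ≤ 2*ε := by
    have h0 := mul_le_mul_of_nonneg_right (le_of_lt hε2) hε.le
    linarith only [h0]
  have hlamε : lam ≤ ε*ε/1024 := by
    have h0 : (ε/32:ℝ)^2 = ε*ε/1024 := by ring
    linarith only [hlam_le, h0]
  have hν_fin : (255/256) * ν ≤ 2*lam + (18/17)*(ε/8) + (ε/16)*(ε/8) := by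
    have h2 : (255/256:ℝ)*ν ≤ (1 - lam)*ν :=
      mul_le_mul_of_nonneg_right (by linarith only [hlam256]) hν0
    linarith only [hν_ineq, hG2', h2]
  linarith only [hfinal1, hν_fin, hεsq, hlamε, hν0, hlam0, hε]
end

section
/- Let X be a real Banach space and (e_i)_{i≥1} a normalized unconditional basis of X. Then (e_i) has the local Property Q if and only if (e_i) is not equivalent to the canonical basis of c_0 (i.e., there is no C ≥ 1 such that C^{-1}·max_i |a_i| ≤ ‖∑ a_i e_i‖ ≤ C·max_i |a_i| for all finitely supported scalars (a_i)). -/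
namespace Stmt19


variable {X : Type*} [NormedAddCommGroup X] [NormedSpace ℝ X]

/-- The finite sum `∑ g i • e i`. -/
noncomputable def Sm (e : ℕ → X) (k : ℕ) (g : Fin k → ℝ) : X :=
  ∑ i : Fin k, g i • e (i : ℕ)

/-- `t n = ‖∑_{i<n} e i‖`. -/
noncomputable def tN (e : ℕ → X) (n : ℕ) : ℝ := ‖∑ i ∈ Finset.range n, e i‖

lemma Sm_sub (e : ℕ → X) (k : ℕ) (g h : Fin k → ℝ) :
    Sm e k (fun i => g i - h i) = Sm e k g - Sm e k h := by
  simp [Sm, sub_smul, Finset.sum_sub_distrib]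

lemma Sm_smul (e : ℕ → X) (k : ℕ) (c : ℝ) (g : Fin k → ℝ) :
    Sm e k (fun i => c * g i) = c • Sm e k g := by
  simp [Sm, mul_smul, Finset.smul_sum]

lemma Sm_sum (e : ℕ → X) (k : ℕ) (s : Finset ℕ) (c : ℕ → Fin k → ℝ) :
    Sm e k (fun i => ∑ ρ ∈ s, c ρ i) = ∑ ρ ∈ s, Sm e k (c ρ) := by
  simp only [Sm, Finset.sum_smul]
  exact Finset.sum_comm


lemma Sm_indicator (e : ℕ → X) (k : ℕ) (P : ℕ → Prop) [DecidablePred P] :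
    Sm e k (fun i => if P ((i : Fin k) : ℕ) then (1 : ℝ) else 0)
      = ∑ n ∈ (Finset.range k).filter P, e n := by
  unfold Sm
  have h1 : ∀ i : Fin k, (if P ((i : Fin k) : ℕ) then (1 : ℝ) else 0) • e (i : ℕ)
      = (fun n => if P n then e n else 0) ((i : Fin k) : ℕ) := by
    intro i
    by_cases h : P ((i : Fin k) : ℕ) <;> simp [h]
  rw [Finset.sum_congr rfl (fun i _ => h1 i),
    Fin.sum_univ_eq_sum_range (fun n => if P n then e n else 0) k, Finset.sum_filter]


lemma Sm_one (e : ℕ → X) (k : ℕ) :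
    Sm e k (fun _ => (1 : ℝ)) = ∑ n ∈ Finset.range k, e n := by
  unfold Sm
  rw [← Fin.sum_univ_eq_sum_range (fun n => e n) k]
  simp

/-- Transfer unconditionality to `Fin k` indexed sums. -/
lemma uncondFin (e : ℕ → X) (K : ℝ)
    (hK : ∀ (s : Finset ℕ) (a b : ℕ → ℝ),
      (∀ i ∈ s, |a i| ≤ |b i|) → ‖∑ i ∈ s, a i • e i‖ ≤ K * ‖∑ i ∈ s, b i • e i‖)
    {k : ℕ} (g h : Fin k → ℝ) (hgh : ∀ i, |g i| ≤ |h i|) :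
    ‖Sm e k g‖ ≤ K * ‖Sm e k h‖ := by
  classical
  have key : ∀ g : Fin k → ℝ,
      Sm e k g = ∑ i ∈ Finset.range k, (fun n => if hn : n < k then g ⟨n, hn⟩ else 0) i • e i := by
    intro g
    rw [Sm, ← Fin.sum_univ_eq_sum_range (fun n => (if hn : n < k then g ⟨n, hn⟩ else 0) • e n) k]
    apply Finset.sum_congr rfl
    intro i _
    simp [i.isLt]
  rw [key g, key h]
  apply hK
  intro i hi
  have hik : i < k := Finset.mem_range.mp hi
  simp [hik]
  exact hgh ⟨i, hik⟩



/-- region index of coordinate `i`: the largest `ρ ≤ d` with `m ρ ≤ i`. -/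
noncomputable def rr (d : ℕ) (m : ℕ → ℕ) (i : ℕ) : ℕ :=
  Nat.findGreatest (fun s => m s ≤ i) d

/-- right endpoint of region `ρ`. -/
def nn (d k : ℕ) (m : ℕ → ℕ) (ρ : ℕ) : ℕ := if ρ < d then m (ρ + 1) else k

section regions

variable {d : ℕ} {m : ℕ → ℕ}

lemma m_mono (hmono : ∀ s, s < d → m s < m (s + 1)) :
    ∀ b, b ≤ d → ∀ a, a < b → m a < m b := by
  intro b
  induction b with
  | zero => intro _ a ha; omega
  | succ n ih =>
    intro hbd a ha
    rcases Nat.lt_succ_iff_lt_or_eq.mp ha with h | h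
    · exact (ih (by omega) a h).trans (hmono n (by omega))
    · subst h; exact hmono a (by omega)

lemma m_mono_le (hmono : ∀ s, s < d → m s < m (s + 1)) :
    ∀ a b, a ≤ b → b ≤ d → m a ≤ m b := by
  intro a b hab hbd
  rcases Nat.lt_or_ge a b with h | h
  · exact (m_mono hmono b hbd a h).le
  · have : a = b := le_antisymm hab h
    simp [this]

lemma rr_le (d : ℕ) (m : ℕ → ℕ) (i : ℕ) : rr d m i ≤ d := Nat.findGreatest_le d

lemma rr_spec1 (hm0 : m 0 = 0) (i : ℕ) : m (rr d m i) ≤ i :=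
  Nat.findGreatest_spec (P := fun s => m s ≤ i) (Nat.zero_le d) (by simp [hm0])

lemma rr_spec2 (i : ℕ) (h : rr d m i < d) : i < m (rr d m i + 1) := by
  by_contra hc
  have hgr := Nat.findGreatest_is_greatest (P := fun s => m s ≤ i) (n := d)
    (k := rr d m i + 1) (Nat.lt_succ_self _) (by omega)
  exact hgr (by omega)

lemma rr_eq (hmono : ∀ s, s < d → m s < m (s + 1))
    (ρ : ℕ) (hρ : ρ ≤ d) (i : ℕ) (h1 : m ρ ≤ i) (h2 : ρ < d → i < m (ρ + 1)) :
    rr d m i = ρ := by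
  apply le_antisymm
  · by_contra hc
    push_neg at hc
    have h3 : ρ < d := lt_of_lt_of_le hc (rr_le d m i)
    have h4 : m (ρ + 1) ≤ m (rr d m i) :=
      m_mono_le hmono (ρ + 1) (rr d m i) hc (rr_le d m i)
    have := Nat.findGreatest_spec (P := fun s => m s ≤ i) (m := ρ) hρ h1
    have h5 : m (rr d m i) ≤ i := this
    have := h2 h3
    omega
  · exact Nat.le_findGreatest hρ h1

lemma zVec_eq (hd : 1 ≤ d) (hm0 : m 0 = 0) (hmono : ∀ s, s < d → m s < m (s + 1))
    {k : ℕ} (i : Fin k) :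
    zVec d k m i = 1 - (rr d m (i : ℕ) : ℝ) / d := by
  classical
  set ρ := rr d m (i : ℕ) with hρdef
  have hρd : ρ ≤ d := rr_le d m _
  have hP : m ρ ≤ (i : ℕ) := rr_spec1 hm0 _
  rcases Nat.lt_or_ge ρ d with hlt | hge
  · have hG : (i : ℕ) < m (ρ + 1) := rr_spec2 _ hlt
    rw [zVec]
    rw [Finset.sum_eq_single (ρ + 1)]
    · have : m (ρ + 1 - 1) ≤ (i : ℕ) ∧ (i : ℕ) < m (ρ + 1) := by
        constructor
        · simpa using hP
        · exact hG
      rw [if_pos this]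
      push_cast
      ring
    · intro s hs hne
      rw [Finset.mem_Icc] at hs
      have : ¬ (m (s - 1) ≤ (i : ℕ) ∧ (i : ℕ) < m s) := by
        rintro ⟨ha, hb⟩
        rcases Nat.lt_or_ge s (ρ + 1) with h | h
        · -- s ≤ ρ : m s ≤ m ρ ≤ i contradicts i < m s
          have : m s ≤ m ρ := m_mono_le hmono s ρ (by omega) hρd
          omega
        · -- s ≥ ρ + 2 : m (s-1) ≥ m (ρ+1) > i
          have hs1 : ρ + 1 ≤ s - 1 := by omega
          have : m (ρ + 1) ≤ m (s - 1) := m_mono_le hmono _ _ hs1 (by omega)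
          omega
      rw [if_neg this, mul_zero]
    · intro hnot
      exfalso
      apply hnot
      rw [Finset.mem_Icc]
      omega
  · have hρ : ρ = d := le_antisymm hρd hge
    rw [zVec]
    rw [Finset.sum_eq_zero]
    · rw [hρ]
      have : (d : ℝ) ≠ 0 := by positivity
      field_simp
      norm_num
    · intro s hs
      rw [Finset.mem_Icc] at hs
      have : ¬ (m (s - 1) ≤ (i : ℕ) ∧ (i : ℕ) < m s) := by
        rintro ⟨ha, hb⟩
        have : m s ≤ m ρ := by
          rw [hρ]; exact m_mono_le hmono s d hs.2 le_rfl
        omega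
      rw [if_neg this, mul_zero]

end regions

section supnorm

lemma supNorm_le_iff {k : ℕ} (hk : 0 < k) (x : Fin k → ℝ) (b : ℝ) :
    supNorm x ≤ b ↔ ∀ i, |x i| ≤ b := by
  have : Nonempty (Fin k) := ⟨⟨0, hk⟩⟩
  rw [supNorm, ciSup_le_iff (Set.Finite.bddAbove (Set.finite_range _))]

lemma le_supNorm {k : ℕ} (x : Fin k → ℝ) (i : Fin k) : |x i| ≤ supNorm x :=
  le_ciSup (f := fun j => |x j|) (Set.Finite.bddAbove (Set.finite_range _)) i

lemma supNorm_eq_one {k : ℕ} (x : Fin k → ℝ) (h1 : ∀ i, |x i| ≤ 1)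
    (i : Fin k) (hi : x i = 1) : supNorm x = 1 := by
  have hk : 0 < k := i.pos
  apply le_antisymm
  · exact (supNorm_le_iff hk x 1).mpr h1
  · calc (1 : ℝ) = |x i| := by rw [hi]; simp
    _ ≤ supNorm x := le_supNorm x i

end supnorm



/-- extension of a `Fin k`-vector to `ℕ` by zero -/
noncomputable def ext {k : ℕ} (g : Fin k → ℝ) : ℕ → ℝ :=
  fun n => if hn : n < k then g ⟨n, hn⟩ else 0

lemma ext_coe {k : ℕ} (g : Fin k → ℝ) (i : Fin k) : ext g (i : ℕ) = g i := by
  simp [ext, i.isLt]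

lemma Sm_eq_range (e : ℕ → X) (k : ℕ) (g : Fin k → ℝ) :
    Sm e k g = ∑ i ∈ Finset.range k, ext g i • e i := by
  rw [Sm, ← Fin.sum_univ_eq_sum_range (fun n => ext g n • e n) k]
  apply Finset.sum_congr rfl
  intro i _
  rw [ext_coe]

lemma Sm_sub_pi (e : ℕ → X) (k : ℕ) (g h : Fin k → ℝ) :
    Sm e k g - Sm e k h = Sm e k (g - h) := by
  rw [← Sm_sub]
  congr 1

lemma sup'_eq_supNorm {k : ℕ} (hk : 0 < k) (x : Fin k → ℝ) :
    (Finset.range k).sup' ⟨0, Finset.mem_range.mpr hk⟩ (fun i => |ext x i|) = supNorm x := by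
  have : Nonempty (Fin k) := ⟨⟨0, hk⟩⟩
  apply le_antisymm
  · apply Finset.sup'_le
    intro i hi
    have hik : i < k := Finset.mem_range.mp hi
    have : ext x i = x ⟨i, hik⟩ := by simp [ext, hik]
    rw [this]
    exact le_supNorm x ⟨i, hik⟩
  · rw [supNorm]
    apply ciSup_le
    intro j
    have h1 : |x j| = |ext x (j : ℕ)| := by rw [ext_coe]
    rw [h1]
    exact Finset.le_sup' (fun i => |ext x i|) (Finset.mem_range.mpr j.isLt)

/-- single coordinate bound from unconditionality -/
lemma coord_le (e : ℕ → X) (K : ℝ)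
    (hnorm : ∀ i, ‖e i‖ = 1)
    (hK : ∀ (s : Finset ℕ) (a b : ℕ → ℝ),
      (∀ i ∈ s, |a i| ≤ |b i|) → ‖∑ i ∈ s, a i • e i‖ ≤ K * ‖∑ i ∈ s, b i • e i‖)
    (s : Finset ℕ) (a : ℕ → ℝ) (j : ℕ) (hj : j ∈ s) :
    |a j| ≤ K * ‖∑ i ∈ s, a i • e i‖ := by
  classical
  have h1 : ∑ i ∈ s, (fun i => if i = j then a j else 0) i • e i = a j • e j := by
    rw [Finset.sum_eq_single_of_mem j hj]
    · simp
    · intro i _ hne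
      simp [hne]
  have h2 := hK s (fun i => if i = j then a j else 0) a (by
    intro i _
    by_cases h : i = j
    · subst h; simp
    · simp [h, abs_nonneg])
  rw [h1, norm_smul, Real.norm_eq_abs, hnorm j, mul_one] at h2
  exact h2

/-- partial sums dominate (up to K) earlier partial sums -/
lemma tN_mono_K (e : ℕ → X) (K : ℝ)
    (hK : ∀ (s : Finset ℕ) (a b : ℕ → ℝ),
      (∀ i ∈ s, |a i| ≤ |b i|) → ‖∑ i ∈ s, a i • e i‖ ≤ K * ‖∑ i ∈ s, b i • e i‖)
    {n₁ n : ℕ} (h : n₁ ≤ n) : tN e n₁ ≤ K * tN e n := by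
  classical
  have h1 : ∑ i ∈ Finset.range n, (fun i => if i ∈ Finset.range n₁ then (1:ℝ) else 0) i • e i
      = ∑ i ∈ Finset.range n₁, e i := by
    have : ∀ i ∈ Finset.range n, (if i ∈ Finset.range n₁ then (1:ℝ) else 0) • e i
        = (if i ∈ Finset.range n₁ then e i else 0) := by
      intro i _
      by_cases hin : i ∈ Finset.range n₁ <;> simp [hin]
    rw [Finset.sum_congr rfl this, Finset.sum_ite_mem]
    congr 1
    rw [Finset.inter_eq_right.mpr]
    intro i hi
    rw [Finset.mem_range] at hi ⊢
    omega
  have h2 := hK (Finset.range n) (fun i => if i ∈ Finset.range n₁ then (1:ℝ) else 0)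
    (fun _ => 1) (by
      intro i _
      by_cases hin : i ∈ Finset.range n₁ <;> simp [hin])
  rw [h1] at h2
  have h3 : ∑ i ∈ Finset.range n, (fun _ => (1:ℝ)) i • e i = ∑ i ∈ Finset.range n, e i := by
    simp
  rw [h3] at h2
  exact h2

/-- sum over a finset is bounded by `K * tN` -/
lemma sum_finset_le (e : ℕ → X) (K : ℝ)
    (hK : ∀ (s : Finset ℕ) (a b : ℕ → ℝ),
      (∀ i ∈ s, |a i| ≤ |b i|) → ‖∑ i ∈ s, a i • e i‖ ≤ K * ‖∑ i ∈ s, b i • e i‖)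
    (s : Finset ℕ) {n : ℕ} (h : ∀ i ∈ s, i < n) : ‖∑ i ∈ s, e i‖ ≤ K * tN e n := by
  classical
  have h1 : ∑ i ∈ Finset.range n, (fun i => if i ∈ s then (1:ℝ) else 0) i • e i
      = ∑ i ∈ s, e i := by
    have : ∀ i ∈ Finset.range n, (if i ∈ s then (1:ℝ) else 0) • e i
        = (if i ∈ s then e i else 0) := by
      intro i _
      by_cases hin : i ∈ s <;> simp [hin]
    rw [Finset.sum_congr rfl this, Finset.sum_ite_mem]
    congr 1
    exact Finset.inter_eq_right.mpr (fun i hi => Finset.mem_range.mpr (h i hi))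
  have h2 := hK (Finset.range n) (fun i => if i ∈ s then (1:ℝ) else 0) (fun _ => 1) (by
    intro i _
    by_cases hin : i ∈ s <;> simp [hin])
  rw [h1] at h2
  have h3 : ∑ i ∈ Finset.range n, (fun _ => (1:ℝ)) i • e i = ∑ i ∈ Finset.range n, e i := by
    simp
  rw [h3] at h2
  exact h2

/-- recursively chosen fast-growing sequence -/
noncomputable def seqQ (t : ℕ → ℝ) (R : ℝ) (hg : ∀ B : ℝ, ∀ N : ℕ, ∃ n, N < n ∧ B ≤ t n) :
    ℕ → ℕ
  | 0 => (hg 1 0).choose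
  | (j + 1) => (hg (R * t (seqQ t R hg j) + 1) (seqQ t R hg j)).choose

lemma seqQ_lt (t : ℕ → ℝ) (R : ℝ) (hg : ∀ B : ℝ, ∀ N : ℕ, ∃ n, N < n ∧ B ≤ t n) (j : ℕ) :
    seqQ t R hg j < seqQ t R hg (j + 1) :=
  (hg (R * t (seqQ t R hg j) + 1) (seqQ t R hg j)).choose_spec.1

lemma seqQ_ge (t : ℕ → ℝ) (R : ℝ) (hg : ∀ B : ℝ, ∀ N : ℕ, ∃ n, N < n ∧ B ≤ t n) (j : ℕ) :
    R * t (seqQ t R hg j) + 1 ≤ t (seqQ t R hg (j + 1)) :=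
  (hg (R * t (seqQ t R hg j) + 1) (seqQ t R hg j)).choose_spec.2

lemma seqQ_one (t : ℕ → ℝ) (R : ℝ) (hg : ∀ B : ℝ, ∀ N : ℕ, ∃ n, N < n ∧ B ≤ t n) (j : ℕ)
    (ht : ∀ n, 0 ≤ t n) (hR : 0 ≤ R) : 1 ≤ t (seqQ t R hg j) := by
  cases j with
  | zero => exact (hg 1 0).choose_spec.2
  | succ n =>
    have := seqQ_ge t R hg n
    have h2 : 0 ≤ R * t (seqQ t R hg n) := mul_nonneg hR (ht _)
    linarith

lemma seqQ_strict (t : ℕ → ℝ) (R : ℝ) (hg : ∀ B : ℝ, ∀ N : ℕ, ∃ n, N < n ∧ B ≤ t n) :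
    StrictMono (seqQ t R hg) :=
  strictMono_nat_of_lt_succ (seqQ_lt t R hg)

lemma seqQ_growth (t : ℕ → ℝ) (R : ℝ) (hg : ∀ B : ℝ, ∀ N : ℕ, ∃ n, N < n ∧ B ≤ t n)
    (ht : ∀ n, 0 ≤ t n) (hR : 1 ≤ R) :
    ∀ a b, a < b → R * t (seqQ t R hg a) ≤ t (seqQ t R hg b) := by
  intro a b hab
  induction b with
  | zero => omega
  | succ n ih =>
    rcases Nat.lt_succ_iff_lt_or_eq.mp hab with h | h
    · have h1 := ih h
      have h2 := seqQ_ge t R hg n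
      have h3 : t (seqQ t R hg n) ≤ R * t (seqQ t R hg n) := le_mul_of_one_le_left (ht _) hR
      linarith
    · subst h
      have := seqQ_ge t R hg a
      linarith

/-- recursively chosen increasing sequence inside an infinite set, starting at 0 -/
noncomputable def seqM (Q : Set ℕ) (hQ : Q.Infinite) : ℕ → ℕ
  | 0 => 0
  | (j + 1) => (hQ.exists_gt (seqM Q hQ j)).choose

lemma seqM_mem (Q : Set ℕ) (hQ : Q.Infinite) (j : ℕ) : seqM Q hQ (j + 1) ∈ Q :=
  (hQ.exists_gt (seqM Q hQ j)).choose_spec.1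

lemma seqM_lt (Q : Set ℕ) (hQ : Q.Infinite) (j : ℕ) : seqM Q hQ j < seqM Q hQ (j + 1) :=
  (hQ.exists_gt (seqM Q hQ j)).choose_spec.2


/-- even floor -/
def fe (ρ : ℕ) : ℕ := 2 * (ρ / 2)
/-- odd floor (0 ↦ 0) -/
def fo (ρ : ℕ) : ℕ := if ρ = 0 then 0 else 2 * ((ρ - 1) / 2) + 1

lemma fe_le (ρ : ℕ) : fe ρ ≤ ρ := by unfold fe; omega
lemma fe_ge (ρ : ℕ) : ρ ≤ fe ρ + 1 := by unfold fe; omega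
lemma fo_le (ρ : ℕ) : fo ρ ≤ ρ := by unfold fo; split <;> omega
lemma fo_ge (ρ : ℕ) : ρ ≤ fo ρ + 1 := by unfold fo; split <;> omega
lemma fe_merge1 (ρ : ℕ) (h : ρ % 2 = 0) : fe ρ = ρ := by unfold fe; omega
lemma fe_merge2 (ρ : ℕ) (h : ρ % 2 = 0) : fe (ρ + 1) = ρ := by unfold fe; omega
lemma fo_merge1 (ρ : ℕ) (h : ρ % 2 = 1) : fo ρ = ρ := by unfold fo; split <;> omega
lemma fo_merge2 (ρ : ℕ) (h : ρ % 2 = 1) : fo (ρ + 1) = ρ := by unfold fo; split <;> omega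

set_option maxHeartbeats 2000000 in
lemma core {X : Type*} [NormedAddCommGroup X] [NormedSpace ℝ X]
    (e : ℕ → X) (K : ℝ) (hK1 : 1 ≤ K)
    (hK : ∀ (s : Finset ℕ) (a b : ℕ → ℝ),
      (∀ i ∈ s, |a i| ≤ |b i|) → ‖∑ i ∈ s, a i • e i‖ ≤ K * ‖∑ i ∈ s, b i • e i‖)
    (d : ℕ) (hd : 1 ≤ d) (ε : ℝ) (hε : 0 < ε)
    (m : ℕ → ℕ) (hm0 : m 0 = 0) (hmono : ∀ s, s < d → m s < m (s + 1))
    (k : ℕ) (hdk : m d < k)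
    (hw1 : ∀ ρ, ρ ≤ d → 2 * tN e (m ρ) ≤ tN e (nn d k m ρ))
    (hw2 : ∀ ρ, ρ < d → (100 * ((d : ℝ) + 1)) * tN e (nn d k m ρ) ≤ tN e (nn d k m (ρ + 1)))
    (hw3 : ∀ ρ, ρ ≤ d → 1 ≤ tN e (nn d k m ρ))
    (F : (Fin k → ℝ) → (Fin k → ℝ))
    (hF1 : ∀ x : Fin k → ℝ, supNorm x = 1 → (∀ i, 0 ≤ x i) →
      (‖Sm e k (F x)‖ = 1 ∧ ∀ i, 0 ≤ F x i))
    (hF2 : ∀ x : Fin k → ℝ, supNorm x = 1 → (∀ i, 0 ≤ x i) →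
      ∀ i j, x i = x j → F x i = F x j)
    (hF3 : ∀ x y : Fin k → ℝ, supNorm x = 1 → (∀ i, 0 ≤ x i) →
      supNorm y = 1 → (∀ i, 0 ≤ y i) → supNorm (x - y) ≤ 1 / (d : ℝ) →
      ‖Sm e k (F x) - Sm e k (F y)‖ ≤ (1 / (12 * K)) * ε) :
    ‖Sm e k (F (zVec d k m)) - (tN e k)⁻¹ • ∑ i ∈ Finset.range k, e i‖ ≤ ε / 2 := by
  classical
  have hK0 : (0 : ℝ) < K := lt_of_lt_of_le one_pos hK1
  set γε : ℝ := (1 / (12 * K)) * ε with hγεdef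
  have hγε : 0 < γε := by positivity
  have hd0 : (0 : ℝ) < d := by exact_mod_cast hd
  set R : ℝ := 100 * ((d : ℝ) + 1) with hRdef
  have hR8 : (8 : ℝ) ≤ R := by nlinarith
  have hRpos : (0 : ℝ) < R := by linarith
  have hk0 : 0 < k := lt_of_le_of_lt (Nat.zero_le _) hdk
  -- indices
  have hmk : ∀ ρ, ρ ≤ d → m ρ < k :=
    fun ρ h => lt_of_le_of_lt (m_mono_le hmono ρ d h le_rfl) hdk
  set ι : ℕ → Fin k := fun ρ => ⟨m (min ρ d), hmk _ (min_le_right _ _)⟩ with hιdef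
  have hιv : ∀ ρ, ρ ≤ d → ((ι ρ : Fin k) : ℕ) = m ρ := by
    intro ρ h; simp [hιdef, min_eq_left h]
  have hrι : ∀ ρ, ρ ≤ d → rr d m ((ι ρ : Fin k) : ℕ) = ρ := by
    intro ρ h
    rw [hιv ρ h]
    exact rr_eq hmono ρ h (m ρ) le_rfl (fun hlt => hmono ρ hlt)
  have hr_le : ∀ n : ℕ, rr d m n ≤ d := rr_le d m
  -- the staircase vectors
  set yv : (ℕ → ℕ) → (Fin k → ℝ) :=
    fun ff i => 1 - (ff (rr d m (i : ℕ)) : ℝ) / d with hyvdef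
  have hyv_sphere : ∀ ff : ℕ → ℕ, (∀ ρ, ff ρ ≤ ρ) →
      supNorm (yv ff) = 1 ∧ (∀ i, 0 ≤ yv ff i) := by
    intro ff hle
    have h01 : ∀ i : Fin k, 0 ≤ yv ff i ∧ yv ff i ≤ 1 := by
      intro i
      have h1 : ff (rr d m (i : ℕ)) ≤ d := le_trans (hle _) (hr_le _)
      have h3 : (ff (rr d m (i : ℕ)) : ℝ) ≤ d := by exact_mod_cast h1
      have h2 : (0 : ℝ) ≤ (ff (rr d m (i : ℕ)) : ℝ) := by positivity
      constructor
      · simp only [hyvdef]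
        rw [sub_nonneg, div_le_one hd0]
        exact h3
      · simp only [hyvdef]
        have : 0 ≤ (ff (rr d m (i : ℕ)) : ℝ) / d := by positivity
        linarith
    refine ⟨?_, fun i => (h01 i).1⟩
    apply supNorm_eq_one _ (fun i => by
      rw [abs_le]; exact ⟨by linarith [(h01 i).1], (h01 i).2⟩) (ι 0)
    have h0 : rr d m ((ι 0 : Fin k) : ℕ) = 0 := hrι 0 (Nat.zero_le d)
    rw [hιv 0 (Nat.zero_le d)] at h0
    have hff0 : ff 0 = 0 := Nat.le_zero.mp (hle 0)
    simp [hyvdef, h0, hff0]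
    exact Or.inl (by rw [hrι 0 (Nat.zero_le d), hff0])
  set z : Fin k → ℝ := yv id with hzdef
  have hzv : zVec d k m = z := by
    funext i
    rw [zVec_eq hd hm0 hmono i]
    simp [hzdef, hyvdef]
  have hz_sphere := hyv_sphere id (fun ρ => le_rfl)
  -- continuity application
  have hmove : ∀ ff : ℕ → ℕ, (∀ ρ, ff ρ ≤ ρ) → (∀ ρ, ρ ≤ ff ρ + 1) →
      ‖Sm e k (F z) - Sm e k (F (yv ff))‖ ≤ γε := by
    intro ff hle hge
    have hs := hyv_sphere ff hle
    apply hF3 z (yv ff) hz_sphere.1 hz_sphere.2 hs.1 hs.2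
    rw [supNorm_le_iff hk0]
    intro i
    set ρ := rr d m (i : ℕ)
    have h1 : (ff ρ : ℝ) ≤ (ρ : ℝ) := by exact_mod_cast hle ρ
    have h2 : (ρ : ℝ) ≤ (ff ρ : ℝ) + 1 := by exact_mod_cast hge ρ
    have hval : (z - yv ff) i = ((ff ρ : ℝ) - (ρ : ℝ)) / d := by
      simp only [Pi.sub_apply, hzdef, hyvdef, id]
      ring
    calc |(z - yv ff) i| = |(ff ρ : ℝ) - (ρ : ℝ)| / d := by
          rw [hval, abs_div, abs_of_pos hd0]
    _ ≤ 1 / d := by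
          gcongr
          rw [abs_le]; constructor <;> linarith
  -- step-preserving constancy on regions
  have hconst : ∀ ff : ℕ → ℕ, (∀ ρ, ff ρ ≤ ρ) →
      ∀ i : Fin k, F (yv ff) i = F (yv ff) (ι (rr d m (i : ℕ))) := by
    intro ff hle i
    have hs := hyv_sphere ff hle
    apply hF2 (yv ff) hs.1 hs.2
    simp only [hyvdef]
    rw [hrι _ (hr_le _)]
  -- merged pairs have equal coefficients
  have hpair : ∀ ff : ℕ → ℕ, (∀ ρ, ff ρ ≤ ρ) → ∀ ρ, ρ < d → ff ρ = ρ → ff (ρ + 1) = ρ →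
      F (yv ff) (ι (ρ + 1)) = F (yv ff) (ι ρ) := by
    intro ff hle ρ hρ h1 h2
    have hs := hyv_sphere ff hle
    apply hF2 (yv ff) hs.1 hs.2
    simp only [hyvdef]
    rw [hrι _ (by omega), hrι _ (by omega), h1, h2]
  set G : Fin k → ℝ := F z with hGdef
  set g : ℕ → ℝ := fun ρ => G (ι ρ) with hgdef
  have hGr : ∀ i : Fin k, G i = g (rr d m (i : ℕ)) := hconst id (fun _ => le_rfl)
  -- region indicator vectors
  set u : ℕ → X := fun ρ => Sm e k (fun i => if rr d m (i : ℕ) = ρ then (1 : ℝ) else 0) with hudef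
  set w : ℕ → ℝ := fun ρ => ‖u ρ‖ with hwdef
  have hSm_ind : ∀ (c : ℝ) (ρ : ℕ),
      Sm e k (fun i => if rr d m (i : ℕ) = ρ then c else 0) = c • u ρ := by
    intro c ρ
    have hfn : (fun i : Fin k => if rr d m (i : ℕ) = ρ then c else 0)
        = fun i : Fin k => c * (if rr d m (i : ℕ) = ρ then (1 : ℝ) else 0) := by
      funext i; by_cases h : rr d m (i : ℕ) = ρ <;> simp [h]
    rw [hfn, Sm_smul]
  have hnnk : ∀ ρ, ρ ≤ d → nn d k m ρ ≤ k := by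
    intro ρ h; unfold nn; split
    · exact le_of_lt (hmk _ (by omega))
    · exact le_rfl
  have hmnn : ∀ ρ, ρ ≤ d → m ρ ≤ nn d k m ρ := by
    intro ρ h; unfold nn; split
    · next hlt => exact le_of_lt (m_mono hmono (ρ + 1) (by omega) ρ (by omega))
    · next hlt =>
        have hρd : ρ = d := by omega
        subst hρd
        exact le_of_lt hdk
  have hiff : ∀ ρ, ρ ≤ d → ∀ n, n < k → (rr d m n = ρ ↔ (m ρ ≤ n ∧ n < nn d k m ρ)) := by
    intro ρ hρ n hn
    constructor
    · intro h
      constructor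
      · rw [← h]; exact rr_spec1 hm0 n
      · unfold nn; split
        · next hlt => rw [← h]; exact rr_spec2 n (by omega)
        · exact hn
    · rintro ⟨h1, h2⟩
      apply rr_eq hmono ρ hρ n h1
      intro hlt
      unfold nn at h2
      rwa [if_pos hlt] at h2
  have hu : ∀ ρ, ρ ≤ d →
      u ρ = (∑ i ∈ Finset.range (nn d k m ρ), e i) - (∑ i ∈ Finset.range (m ρ), e i) := by
    intro ρ hρ
    have e1 : u ρ = ∑ n ∈ (Finset.range k).filter (fun n => rr d m n = ρ), e n :=
      Sm_indicator e k (fun n => rr d m n = ρ)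
    have e3 : (Finset.range k).filter (fun n => rr d m n = ρ)
        = Finset.Ico (m ρ) (nn d k m ρ) := by
      ext n
      rw [Finset.mem_filter, Finset.mem_range, Finset.mem_Ico]
      constructor
      · rintro ⟨hn, h⟩
        exact (hiff ρ hρ n hn).mp h
      · intro hn
        have hnk : n < k := lt_of_lt_of_le hn.2 (hnnk ρ hρ)
        exact ⟨hnk, (hiff ρ hρ n hnk).mpr hn⟩
    rw [e1, e3, Finset.sum_Ico_eq_sub _ (hmnn ρ hρ)]
  -- norms of region sums
  have t_nonneg : ∀ n, 0 ≤ tN e n := fun n => norm_nonneg _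
  have hw_lb : ∀ ρ, ρ ≤ d → tN e (nn d k m ρ) / 2 ≤ w ρ := by
    intro ρ hρ
    have h1 : tN e (nn d k m ρ) - tN e (m ρ) ≤ w ρ := by
      show _ ≤ ‖u ρ‖
      rw [hu ρ hρ]
      exact norm_sub_norm_le _ _
    have h2 := hw1 ρ hρ
    linarith
  have hw_pos : ∀ ρ, ρ ≤ d → 0 < w ρ := by
    intro ρ hρ
    have := hw_lb ρ hρ
    have := hw3 ρ hρ
    linarith
  have hw_ub : ∀ ρ, ρ ≤ d → w ρ ≤ 2 * tN e (nn d k m ρ) := by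
    intro ρ hρ
    have h1 : w ρ ≤ tN e (nn d k m ρ) + tN e (m ρ) := by
      show ‖u ρ‖ ≤ _
      rw [hu ρ hρ]
      exact norm_sub_le _ _
    have h2 := hw1 ρ hρ
    have := hw3 ρ hρ
    linarith
  have hw_ratio : ∀ ρ, ρ < d → R * w ρ ≤ 4 * w (ρ + 1) := by
    intro ρ hρ
    have h1 : w ρ ≤ 2 * tN e (nn d k m ρ) := hw_ub ρ (le_of_lt hρ)
    have h2 := hw2 ρ hρ
    have h3 : tN e (nn d k m (ρ + 1)) / 2 ≤ w (ρ + 1) := hw_lb (ρ + 1) (by omega)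
    have h4 : R * w ρ ≤ R * (2 * tN e (nn d k m ρ)) :=
      mul_le_mul_of_nonneg_left h1 (le_of_lt hRpos)
    nlinarith
  have hw_mono : ∀ ρ, ρ < d → 2 * w ρ ≤ w (ρ + 1) := by
    intro ρ hρ
    have h1 := hw_ratio ρ hρ
    have h2 := hw_pos (ρ + 1) (by omega)
    have h3 : 8 * w ρ ≤ R * w ρ :=
      mul_le_mul_of_nonneg_right hR8 (le_of_lt (hw_pos ρ (by omega)))
    linarith
  -- coefficient estimates from one move
  have hcoef : ∀ ff : ℕ → ℕ, (∀ ρ, ff ρ ≤ ρ) → (∀ ρ, ρ ≤ ff ρ + 1) →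
      ∀ ρ, ρ ≤ d → |g ρ - F (yv ff) (ι ρ)| * w ρ ≤ K * γε := by
    intro ff hle hge ρ hρ
    set H : Fin k → ℝ := F (yv ff) with hHdef
    set c : ℝ := g ρ - H (ι ρ) with hcdef
    have e2 : ‖Sm e k (fun i => if rr d m (i : ℕ) = ρ then c else 0)‖
        ≤ K * ‖Sm e k (fun i => G i - H i)‖ := by
      apply uncondFin e K hK
      intro i
      have hconstH : ∀ i : Fin k, H i = H (ι (rr d m (i : ℕ))) := hconst ff hle
      by_cases h : rr d m (i : ℕ) = ρ
      · rw [if_pos h]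
        have : c = G i - H i := by
          rw [hcdef, hGr i, hconstH i, h]
        rw [this]
      · rw [if_neg h, abs_zero]
        exact abs_nonneg _
    rw [hSm_ind, norm_smul, Real.norm_eq_abs, Sm_sub] at e2
    calc |c| * w ρ ≤ K * ‖Sm e k G - Sm e k H‖ := e2
    _ ≤ K * γε := by
        apply mul_le_mul_of_nonneg_left _ (le_of_lt hK0)
        exact hmove ff hle hge
  set HE : Fin k → ℝ := F (yv fe) with hHEdef
  set HO : Fin k → ℝ := F (yv fo) with hHOdef
  set φE : ℕ → ℝ := fun ρ => g ρ - HE (ι ρ) with hφEdef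
  set φO : ℕ → ℝ := fun ρ => g ρ - HO (ι ρ) with hφOdef
  have hφE : ∀ ρ, ρ ≤ d → |φE ρ| * w ρ ≤ K * γε := hcoef fe fe_le fe_ge
  have hφO : ∀ ρ, ρ ≤ d → |φO ρ| * w ρ ≤ K * γε := hcoef fo fo_le fo_ge
  have hφE' : ∀ ρ, ρ ≤ d → |φE ρ| ≤ K * γε / w ρ := by
    intro ρ hρ
    rw [le_div_iff₀ (hw_pos ρ hρ)]
    exact hφE ρ hρ
  have hφO' : ∀ ρ, ρ ≤ d → |φO ρ| ≤ K * γε / w ρ := by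
    intro ρ hρ
    rw [le_div_iff₀ (hw_pos ρ hρ)]
    exact hφO ρ hρ
  -- consecutive coefficient differences
  have hΔE : ∀ ρ, ρ < d → ρ % 2 = 0 → g ρ - g (ρ + 1) = φE ρ - φE (ρ + 1) := by
    intro ρ hρ hpar
    have hp : HE (ι (ρ + 1)) = HE (ι ρ) := hpair fe fe_le ρ hρ (fe_merge1 ρ hpar) (fe_merge2 ρ hpar)
    simp only [hφEdef]
    rw [hp]
    ring
  have hΔO : ∀ ρ, ρ < d → ρ % 2 = 1 → g ρ - g (ρ + 1) = φO ρ - φO (ρ + 1) := by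
    intro ρ hρ hpar
    have hp : HO (ι (ρ + 1)) = HO (ι ρ) := hpair fo fo_le ρ hρ (fo_merge1 ρ hpar) (fo_merge2 ρ hpar)
    simp only [hφOdef]
    rw [hp]
    ring
  have hΔ : ∀ ρ, ρ < d → |g ρ - g (ρ + 1)| ≤ 2 * (K * γε) / w ρ := by
    intro ρ hρ
    have hwρ := hw_pos ρ (by omega)
    have hwρ1 := hw_pos (ρ + 1) (by omega)
    have hwmn := hw_mono ρ hρ
    have key : ∀ φ : ℕ → ℝ, (∀ σ, σ ≤ d → |φ σ| ≤ K * γε / w σ) →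
        g ρ - g (ρ + 1) = φ ρ - φ (ρ + 1) → |g ρ - g (ρ + 1)| ≤ 2 * (K * γε) / w ρ := by
      intro φ hφ heq
      rw [heq]
      have h1 := hφ ρ (by omega)
      have h2 := hφ (ρ + 1) (by omega)
      have h3 : K * γε / w (ρ + 1) ≤ K * γε / w ρ := by
        apply div_le_div_of_nonneg_left (by positivity) hwρ
        linarith
      calc |φ ρ - φ (ρ + 1)| ≤ |φ ρ| + |φ (ρ + 1)| := abs_sub _ _
      _ ≤ K * γε / w ρ + K * γε / w ρ := by linarith
      _ = 2 * (K * γε) / w ρ := by ring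
    rcases Nat.mod_two_eq_zero_or_one ρ with hpar | hpar
    · exact key φE hφE' (hΔE ρ hρ hpar)
    · exact key φO hφO' (hΔO ρ hρ hpar)
  -- telescoping bound
  set δ : ℕ → ℝ := fun ρ => g ρ - g d with hδdef
  have hδbound : ∀ j ρ, ρ + j = d → |δ ρ| ≤ 4 * (K * γε) / w ρ := by
    intro j
    induction j with
    | zero =>
      intro ρ h
      have hρe : ρ = d := by omega
      rw [hρe]
      simp only [hδdef, sub_self, abs_zero]
      have := hw_pos d le_rfl
      positivity
    | succ n ih =>
      intro ρ h
      have hρd : ρ < d := by omega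
      have h1 := hΔ ρ hρd
      have h2 := ih (ρ + 1) (by omega)
      have h3 := hw_mono ρ hρd
      have hwρ := hw_pos ρ (by omega)
      have hwρ1 := hw_pos (ρ + 1) (by omega)
      have h4 : |δ ρ| ≤ |g ρ - g (ρ + 1)| + |δ (ρ + 1)| := by
        have : δ ρ = (g ρ - g (ρ + 1)) + δ (ρ + 1) := by simp only [hδdef]; ring
        rw [this]
        exact abs_add_le _ _
      have h5 : 4 * (K * γε) / w (ρ + 1) ≤ 4 * (K * γε) / (2 * w ρ) := by
        apply div_le_div_of_nonneg_left (by positivity) (by linarith) h3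
      have h6 : 4 * (K * γε) / (2 * w ρ) = 2 * (K * γε) / w ρ := by
        field_simp
        ring
      calc |δ ρ| ≤ |g ρ - g (ρ + 1)| + |δ (ρ + 1)| := h4
      _ ≤ 2 * (K * γε) / w ρ + 4 * (K * γε) / (2 * w ρ) := by linarith [h5.trans_eq h6, h2.trans h5]
      _ = 4 * (K * γε) / w ρ := by field_simp; ring
  have hδ' : ∀ ρ, ρ ≤ d → |δ ρ| ≤ 4 * (K * γε) / w ρ := by
    intro ρ hρ
    exact hδbound (d - ρ) ρ (by omega)
  
  -- decomposition of T
  set T : X := Sm e k (fun i => g (rr d m (i : ℕ)) - g d) with hTdef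
  have hT1 : T = ∑ ρ ∈ Finset.range (d + 1), δ ρ • u ρ := by
    have hpt : (fun i : Fin k => g (rr d m (i : ℕ)) - g d)
        = fun i : Fin k => ∑ ρ ∈ Finset.range (d + 1),
            (fun (ρ : ℕ) (i : Fin k) => if rr d m (i : ℕ) = ρ then δ ρ else 0) ρ i := by
      funext i
      rw [Finset.sum_ite_eq (Finset.range (d + 1)) (rr d m (i : ℕ)) δ]
      rw [if_pos (Finset.mem_range.mpr (by have := hr_le ((i : Fin k) : ℕ); omega))]
    calc T = Sm e k (fun i : Fin k => ∑ ρ ∈ Finset.range (d + 1),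
            (fun (ρ : ℕ) (i : Fin k) => if rr d m (i : ℕ) = ρ then δ ρ else 0) ρ i) :=
          congrArg (Sm e k) hpt
    _ = ∑ ρ ∈ Finset.range (d + 1), Sm e k (fun i : Fin k => if rr d m (i : ℕ) = ρ then δ ρ else 0) :=
          Sm_sum e k _ _
    _ = ∑ ρ ∈ Finset.range (d + 1), δ ρ • u ρ :=
          Finset.sum_congr rfl (fun ρ _ => hSm_ind (δ ρ) ρ)
  have hδd : δ d = 0 := by simp only [hδdef, sub_self]
  have hT2 : T = (∑ ρ ∈ Finset.range d, (g ρ - g (ρ + 1)) • u ρ)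
      + ∑ ρ ∈ Finset.range d, δ (ρ + 1) • u ρ := by
    rw [hT1, Finset.sum_range_succ, hδd, zero_smul, add_zero, ← Finset.sum_add_distrib]
    apply Finset.sum_congr rfl
    intro ρ _
    rw [← add_smul]
    congr 1
    simp only [hδdef]
    ring
  set Es : Finset ℕ := (Finset.range d).filter (fun ρ => ρ % 2 = 0) with hEsdef
  set Os : Finset ℕ := (Finset.range d).filter (fun ρ => ¬ ρ % 2 = 0) with hOsdef
  have hsplit : (∑ ρ ∈ Finset.range d, (g ρ - g (ρ + 1)) • u ρ)
      = (∑ ρ ∈ Es, (g ρ - g (ρ + 1)) • u ρ) + ∑ ρ ∈ Os, (g ρ - g (ρ + 1)) • u ρ :=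
    (Finset.sum_filter_add_sum_filter_not _ _ _).symm
  -- "own" bound
  have hown : ∀ H : Fin k → ℝ, (∀ i : Fin k, H i = H (ι (rr d m (i : ℕ)))) →
      ‖Sm e k G - Sm e k H‖ ≤ γε → ∀ S : Finset ℕ,
      ‖∑ ρ ∈ S, (g ρ - H (ι ρ)) • u ρ‖ ≤ K * γε := by
    intro H hconstH hmv S
    have e1 : ∑ ρ ∈ S, (g ρ - H (ι ρ)) • u ρ
        = Sm e k (fun i => if rr d m (i : ℕ) ∈ S then G i - H i else 0) := by
      calc ∑ ρ ∈ S, (g ρ - H (ι ρ)) • u ρ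
          = ∑ ρ ∈ S, Sm e k (fun i : Fin k => if rr d m (i : ℕ) = ρ then g ρ - H (ι ρ) else 0) :=
            Finset.sum_congr rfl (fun ρ _ => (hSm_ind _ ρ).symm)
      _ = Sm e k (fun i : Fin k => ∑ ρ ∈ S,
            (fun (ρ : ℕ) (i : Fin k) => if rr d m (i : ℕ) = ρ then g ρ - H (ι ρ) else 0) ρ i) :=
            (Sm_sum e k S _).symm
      _ = Sm e k (fun i => if rr d m (i : ℕ) ∈ S then G i - H i else 0) := by
            apply congrArg (Sm e k)
            funext i
            rw [Finset.sum_ite_eq S (rr d m (i : ℕ)) (fun ρ => g ρ - H (ι ρ))]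
            by_cases h : rr d m (i : ℕ) ∈ S
            · rw [if_pos h, if_pos h, hGr i, hconstH i]
            · rw [if_neg h, if_neg h]
    rw [e1]
    have e2 : ‖Sm e k (fun i => if rr d m (i : ℕ) ∈ S then G i - H i else 0)‖
        ≤ K * ‖Sm e k (fun i => G i - H i)‖ := by
      apply uncondFin e K hK
      intro i
      by_cases h : rr d m (i : ℕ) ∈ S
      · rw [if_pos h]
      · rw [if_neg h, abs_zero]; exact abs_nonneg _
    calc ‖Sm e k (fun i => if rr d m (i : ℕ) ∈ S then G i - H i else 0)‖
        ≤ K * ‖Sm e k (fun i => G i - H i)‖ := e2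
    _ = K * ‖Sm e k G - Sm e k H‖ := by rw [Sm_sub]
    _ ≤ K * γε := mul_le_mul_of_nonneg_left hmv (le_of_lt hK0)
  -- "foreign" bound
  have hforeign : ∀ φ : ℕ → ℝ, (∀ ρ, ρ ≤ d → |φ ρ| * w ρ ≤ 4 * (K * γε)) → ∀ S : Finset ℕ,
      S ⊆ Finset.range d →
      ‖∑ ρ ∈ S, φ (ρ + 1) • u ρ‖ ≤ (d : ℝ) * (16 * (K * γε) / R) := by
    intro φ hφ S hS
    calc ‖∑ ρ ∈ S, φ (ρ + 1) • u ρ‖ ≤ ∑ ρ ∈ S, ‖φ (ρ + 1) • u ρ‖ := norm_sum_le _ _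
    _ ≤ ∑ _ρ ∈ S, 16 * (K * γε) / R := by
        apply Finset.sum_le_sum
        intro ρ hρS
        have hρd : ρ < d := Finset.mem_range.mp (hS hρS)
        rw [norm_smul, Real.norm_eq_abs]
        have h1 := hφ (ρ + 1) (by omega)
        have h2 := hw_ratio ρ hρd
        have h3 := hw_pos ρ (le_of_lt hρd)
        have h4 := hw_pos (ρ + 1) (by omega)
        show |φ (ρ + 1)| * w ρ ≤ 16 * (K * γε) / R
        rw [le_div_iff₀ hRpos]
        calc |φ (ρ + 1)| * w ρ * R = |φ (ρ + 1)| * (R * w ρ) := by ring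
        _ ≤ |φ (ρ + 1)| * (4 * w (ρ + 1)) := mul_le_mul_of_nonneg_left h2 (abs_nonneg _)
        _ = 4 * (|φ (ρ + 1)| * w (ρ + 1)) := by ring
        _ ≤ 4 * (4 * (K * γε)) := by linarith
        _ = 16 * (K * γε) := by ring
    _ = (S.card : ℝ) * (16 * (K * γε) / R) := by
        rw [Finset.sum_const, nsmul_eq_mul]
    _ ≤ (d : ℝ) * (16 * (K * γε) / R) := by
        apply mul_le_mul_of_nonneg_right _ (by positivity)
        have : S.card ≤ d := le_of_le_of_eq (Finset.card_le_card hS) (Finset.card_range d)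
        exact_mod_cast this
  have hφE4 : ∀ ρ, ρ ≤ d → |φE ρ| * w ρ ≤ 4 * (K * γε) := by
    intro ρ hρ
    have := hφE ρ hρ
    linarith [mul_nonneg (le_of_lt hK0) (le_of_lt hγε)]
  have hφO4 : ∀ ρ, ρ ≤ d → |φO ρ| * w ρ ≤ 4 * (K * γε) := by
    intro ρ hρ
    have := hφO ρ hρ
    linarith [mul_nonneg (le_of_lt hK0) (le_of_lt hγε)]
  have hδ4 : ∀ ρ, ρ ≤ d → |δ ρ| * w ρ ≤ 4 * (K * γε) := by
    intro ρ hρ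
    have h1 := hδ' ρ hρ
    have h2 := hw_pos ρ hρ
    calc |δ ρ| * w ρ ≤ (4 * (K * γε) / w ρ) * w ρ :=
          mul_le_mul_of_nonneg_right h1 (le_of_lt h2)
    _ = 4 * (K * γε) := by field_simp
  -- even / odd rewriting
  have hEs2 : ∑ ρ ∈ Es, (g ρ - g (ρ + 1)) • u ρ
      = (∑ ρ ∈ Es, (g ρ - HE (ι ρ)) • u ρ) - ∑ ρ ∈ Es, φE (ρ + 1) • u ρ := by
    rw [← Finset.sum_sub_distrib]
    apply Finset.sum_congr rfl
    intro ρ hρ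
    rw [← sub_smul]
    congr 1
    have hm' := Finset.mem_filter.mp hρ
    have := hΔE ρ (Finset.mem_range.mp hm'.1) hm'.2
    rw [this]
  have hOs2 : ∑ ρ ∈ Os, (g ρ - g (ρ + 1)) • u ρ
      = (∑ ρ ∈ Os, (g ρ - HO (ι ρ)) • u ρ) - ∑ ρ ∈ Os, φO (ρ + 1) • u ρ := by
    rw [← Finset.sum_sub_distrib]
    apply Finset.sum_congr rfl
    intro ρ hρ
    rw [← sub_smul]
    congr 1
    have hm' := Finset.mem_filter.mp hρ
    have hpar : ρ % 2 = 1 := by omega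
    have := hΔO ρ (Finset.mem_range.mp hm'.1) hpar
    rw [this]
  -- the bound on ‖T‖
  have b1 : ‖∑ ρ ∈ Es, (g ρ - HE (ι ρ)) • u ρ‖ ≤ K * γε :=
    hown HE (hconst fe fe_le) (hmove fe fe_le fe_ge) Es
  have b3 : ‖∑ ρ ∈ Os, (g ρ - HO (ι ρ)) • u ρ‖ ≤ K * γε :=
    hown HO (hconst fo fo_le) (hmove fo fo_le fo_ge) Os
  have b2 : ‖∑ ρ ∈ Es, φE (ρ + 1) • u ρ‖ ≤ (d : ℝ) * (16 * (K * γε) / R) :=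
    hforeign φE hφE4 Es (Finset.filter_subset _ _)
  have b4 : ‖∑ ρ ∈ Os, φO (ρ + 1) • u ρ‖ ≤ (d : ℝ) * (16 * (K * γε) / R) :=
    hforeign φO hφO4 Os (Finset.filter_subset _ _)
  have b5 : ‖∑ ρ ∈ Finset.range d, δ (ρ + 1) • u ρ‖ ≤ (d : ℝ) * (16 * (K * γε) / R) :=
    hforeign δ hδ4 (Finset.range d) (le_refl _)
  have hnum : 3 * ((d : ℝ) * (16 * (K * γε) / R)) ≤ K * γε := by
    have hKγ : 0 < K * γε := mul_pos hK0 hγε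
    have h24 : 48 * (d : ℝ) ≤ R := by rw [hRdef]; linarith
    have h25 : 48 * (d : ℝ) * (K * γε) ≤ R * (K * γε) :=
      mul_le_mul_of_nonneg_right h24 (le_of_lt hKγ)
    have h26 : 3 * ((d : ℝ) * (16 * (K * γε) / R)) = 48 * (d : ℝ) * (K * γε) / R := by
      ring
    rw [h26, div_le_iff₀ hRpos]
    linarith
  have hTbound : ‖T‖ ≤ 3 * (K * γε) := by
    have hTsum : T = (((∑ ρ ∈ Es, (g ρ - HE (ι ρ)) • u ρ) - ∑ ρ ∈ Es, φE (ρ + 1) • u ρ)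
        + ((∑ ρ ∈ Os, (g ρ - HO (ι ρ)) • u ρ) - ∑ ρ ∈ Os, φO (ρ + 1) • u ρ))
        + ∑ ρ ∈ Finset.range d, δ (ρ + 1) • u ρ := by
      rw [hT2, hsplit, hEs2, hOs2]
    rw [hTsum]
    have n1 := norm_add_le (((∑ ρ ∈ Es, (g ρ - HE (ι ρ)) • u ρ) - ∑ ρ ∈ Es, φE (ρ + 1) • u ρ)
        + ((∑ ρ ∈ Os, (g ρ - HO (ι ρ)) • u ρ) - ∑ ρ ∈ Os, φO (ρ + 1) • u ρ))
        (∑ ρ ∈ Finset.range d, δ (ρ + 1) • u ρ)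
    have n2 := norm_add_le ((∑ ρ ∈ Es, (g ρ - HE (ι ρ)) • u ρ) - ∑ ρ ∈ Es, φE (ρ + 1) • u ρ)
        ((∑ ρ ∈ Os, (g ρ - HO (ι ρ)) • u ρ) - ∑ ρ ∈ Os, φO (ρ + 1) • u ρ)
    have n3 := norm_sub_le (∑ ρ ∈ Es, (g ρ - HE (ι ρ)) • u ρ) (∑ ρ ∈ Es, φE (ρ + 1) • u ρ)
    have n4 := norm_sub_le (∑ ρ ∈ Os, (g ρ - HO (ι ρ)) • u ρ) (∑ ρ ∈ Os, φO (ρ + 1) • u ρ)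
    linarith
  -- endgame
  have hTeq : T = Sm e k G - g d • (∑ i ∈ Finset.range k, e i) := by
    have h1 : (fun i : Fin k => g (rr d m (i : ℕ)) - g d)
        = fun i : Fin k => G i - (fun _ : Fin k => g d * 1) i := by
      funext i
      rw [hGr i]
      ring
    calc T = Sm e k (fun i : Fin k => G i - (fun _ : Fin k => g d * 1) i) :=
          congrArg (Sm e k) h1
    _ = Sm e k G - Sm e k (fun _ : Fin k => g d * 1) := Sm_sub e k G _
    _ = Sm e k G - g d • Sm e k (fun _ : Fin k => (1 : ℝ)) := by rw [Sm_smul]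
    _ = Sm e k G - g d • (∑ i ∈ Finset.range k, e i) := by rw [Sm_one]
  have hG1 : ‖Sm e k G‖ = 1 := (hF1 z hz_sphere.1 hz_sphere.2).1
  have hgd0 : 0 ≤ g d := (hF1 z hz_sphere.1 hz_sphere.2).2 (ι d)
  have hτ1 : 1 ≤ tN e k := by
    have h := hw3 d le_rfl
    unfold nn at h
    rwa [if_neg (lt_irrefl d)] at h
  have hτpos : 0 < tN e k := lt_of_lt_of_le one_pos hτ1
  have hτne : tN e k ≠ 0 := ne_of_gt hτpos
  have hgdτ : |g d * tN e k - 1| ≤ ‖T‖ := by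
    have h1 : ‖g d • (∑ i ∈ Finset.range k, e i)‖ = g d * tN e k := by
      rw [norm_smul, Real.norm_eq_abs, abs_of_nonneg hgd0]
      rfl
    calc |g d * tN e k - 1| = |‖g d • (∑ i ∈ Finset.range k, e i)‖ - ‖Sm e k G‖| := by
          rw [h1, hG1]
    _ ≤ ‖g d • (∑ i ∈ Finset.range k, e i) - Sm e k G‖ := abs_norm_sub_norm_le _ _
    _ = ‖T‖ := by rw [norm_sub_rev, ← hTeq]
  have hfinal1 : ‖Sm e k G - (tN e k)⁻¹ • ∑ i ∈ Finset.range k, e i‖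
      ≤ ‖T‖ + |g d * tN e k - 1| := by
    have hid : Sm e k G - (tN e k)⁻¹ • ∑ i ∈ Finset.range k, e i
        = T + (g d - (tN e k)⁻¹) • ∑ i ∈ Finset.range k, e i := by
      rw [hTeq, sub_smul]
      abel
    rw [hid]
    have n1 := norm_add_le T ((g d - (tN e k)⁻¹) • ∑ i ∈ Finset.range k, e i)
    have h2 : ‖(g d - (tN e k)⁻¹) • ∑ i ∈ Finset.range k, e i‖ = |g d * tN e k - 1| := by
      rw [norm_smul, Real.norm_eq_abs]
      have h3 : ‖∑ i ∈ Finset.range k, e i‖ = tN e k := rfl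
      rw [h3]
      calc |g d - (tN e k)⁻¹| * tN e k = |g d - (tN e k)⁻¹| * |tN e k| := by
            rw [abs_of_pos hτpos]
      _ = |(g d - (tN e k)⁻¹) * tN e k| := (abs_mul _ _).symm
      _ = |g d * tN e k - 1| := by
            congr 1
            field_simp
    linarith [n1, h2]
  have hεhalf : 6 * (K * γε) = ε / 2 := by
    rw [hγεdef]
    field_simp
    ring
  show ‖Sm e k (F (zVec d k m)) - (tN e k)⁻¹ • ∑ i ∈ Finset.range k, e i‖ ≤ ε / 2
  rw [hzv]
  calc ‖Sm e k (F z) - (tN e k)⁻¹ • ∑ i ∈ Finset.range k, e i‖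
      = ‖Sm e k G - (tN e k)⁻¹ • ∑ i ∈ Finset.range k, e i‖ := rfl
  _ ≤ ‖T‖ + |g d * tN e k - 1| := hfinal1
  _ ≤ 3 * (K * γε) + 3 * (K * γε) := by linarith [hTbound, hgdτ]
  _ = 6 * (K * γε) := by ring
  _ = ε / 2 := hεhalf



variable {X : Type*} [NormedAddCommGroup X] [NormedSpace ℝ X]

set_option maxHeartbeats 1000000 in
lemma backward (e : ℕ → X) (K : ℝ) (hK1 : 1 ≤ K)
    (hnorm : ∀ i, ‖e i‖ = 1)
    (hK : ∀ (s : Finset ℕ) (a b : ℕ → ℝ),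
      (∀ i ∈ s, |a i| ≤ |b i|) → ‖∑ i ∈ s, a i • e i‖ ≤ K * ‖∑ i ∈ s, b i • e i‖)
    (hNC : ¬ (∃ C : ℝ, 1 ≤ C ∧ ∀ (s : Finset ℕ) (hs : s.Nonempty) (a : ℕ → ℝ),
        C⁻¹ * s.sup' hs (fun i => |a i|) ≤ ‖∑ i ∈ s, a i • e i‖ ∧
        ‖∑ i ∈ s, a i • e i‖ ≤ C * s.sup' hs (fun i => |a i|))) :
    ∃ γ : ℝ, 0 < γ ∧ ∀ d : ℕ, 1 ≤ d → ∀ ε : ℝ, 0 < ε → ε < 1 →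
      ∃ Q : Set ℕ, Q.Infinite ∧
        ∀ (m : ℕ → ℕ), m 0 = 0 → (∀ s, s < d → m s < m (s + 1)) →
          (∀ s, 1 ≤ s → s ≤ d → m s ∈ Q) →
          ∀ k : ℕ, k ∈ Q → m d < k →
          ∀ F : (Fin k → ℝ) → (Fin k → ℝ),
            (∀ x : Fin k → ℝ, supNorm x = 1 → (∀ i, 0 ≤ x i) →
              (‖∑ i : Fin k, F x i • e (i : ℕ)‖ = 1 ∧ ∀ i, 0 ≤ F x i)) →
            (∀ x : Fin k → ℝ, supNorm x = 1 → (∀ i, 0 ≤ x i) →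
              ∀ i j, x i = x j → F x i = F x j) →
            (∀ x y : Fin k → ℝ, supNorm x = 1 → (∀ i, 0 ≤ x i) →
              supNorm y = 1 → (∀ i, 0 ≤ y i) → supNorm (x - y) ≤ 1 / (d : ℝ) →
              ‖(∑ i : Fin k, F x i • e (i : ℕ)) -
                ∑ i : Fin k, F y i • e (i : ℕ)‖ ≤ (1 / (12 * K)) * ε) →
            ‖(∑ i : Fin k, F (zVec d k m) i • e (i : ℕ)) -
              ‖∑ i ∈ Finset.range k, e i‖⁻¹ • ∑ i ∈ Finset.range k, e i‖ ≤ ε := by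
  classical
  have hK0 : (0 : ℝ) < K := lt_of_lt_of_le one_pos hK1
  have htN0 : tN e 0 = 0 := by simp [tN]
  -- partial sums are unbounded
  have hub : ∀ B : ℝ, ∃ n, B ≤ tN e n := by
    by_contra hb
    push_neg at hb
    obtain ⟨B, hB⟩ := hb
    apply hNC
    have hB0 : 0 < B := lt_of_le_of_lt (le_of_eq htN0.symm) (hB 0)
    have hCpos : (0 : ℝ) < K * K * (B + 1) := by positivity
    refine ⟨K * K * (B + 1), by nlinarith, ?_⟩
    intro s hs a
    set M := s.sup' hs (fun i => |a i|) with hMdef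
    obtain ⟨j, hjs, hjM⟩ := Finset.exists_mem_eq_sup' hs (fun i => |a i|)
    have hM0 : 0 ≤ M := by rw [hMdef, hjM]; exact abs_nonneg _
    have hMaj : M = |a j| := by rw [hMdef, hjM]
    constructor
    · -- lower bound
      have h1 : |a j| ≤ K * ‖∑ i ∈ s, a i • e i‖ := coord_le e K hnorm hK s a j hjs
      have h2 : M ≤ K * ‖∑ i ∈ s, a i • e i‖ := by rw [hMaj]; exact h1
      have h3 : (K * K * (B + 1))⁻¹ * M ≤ K⁻¹ * M := by
        apply mul_le_mul_of_nonneg_right _ hM0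
        apply inv_anti₀ hK0
        nlinarith
      have h4 : K⁻¹ * M ≤ ‖∑ i ∈ s, a i • e i‖ := by
        have h4' : K * (K⁻¹ * M) ≤ K * ‖∑ i ∈ s, a i • e i‖ := by
          calc K * (K⁻¹ * M) = M := by field_simp
          _ ≤ K * ‖∑ i ∈ s, a i • e i‖ := h2
        exact le_of_mul_le_mul_left h4' hK0
      linarith
    · -- upper bound
      have hb1 : ∀ i ∈ s, |a i| ≤ |(fun _ : ℕ => M) i| := by
        intro i hi
        have : |a i| ≤ M := Finset.le_sup' (fun i => |a i|) hi
        calc |a i| ≤ M := this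
        _ ≤ |M| := le_abs_self M
      have h5 := hK s a (fun _ => M) hb1
      have h6 : ∑ i ∈ s, (fun _ : ℕ => M) i • e i = M • ∑ i ∈ s, e i := by
        rw [Finset.smul_sum]
      rw [h6, norm_smul, Real.norm_eq_abs, abs_of_nonneg hM0] at h5
      rcases Finset.eq_empty_or_nonempty s with hse | hsne
      · subst hse
        exact absurd hjs (by simp)
      have h7 : ‖∑ i ∈ s, e i‖ ≤ K * tN e (s.max' hsne + 1) :=
        sum_finset_le e K hK s (fun i hi => Nat.lt_succ_of_le (Finset.le_max' s i hi))
      have h8 : tN e (s.max' hsne + 1) ≤ B := le_of_lt (hB _)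
      calc ‖∑ i ∈ s, a i • e i‖ ≤ K * (M * ‖∑ i ∈ s, e i‖) := h5
      _ ≤ K * (M * (K * B)) := by
          apply mul_le_mul_of_nonneg_left _ (le_of_lt hK0)
          apply mul_le_mul_of_nonneg_left _ hM0
          calc ‖∑ i ∈ s, e i‖ ≤ K * tN e (s.max' hsne + 1) := h7
          _ ≤ K * B := mul_le_mul_of_nonneg_left h8 (le_of_lt hK0)
      _ ≤ K * K * (B + 1) * M := by nlinarith
  -- strengthened unboundedness
  have hg : ∀ B : ℝ, ∀ N : ℕ, ∃ n, N < n ∧ B ≤ tN e n := by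
    intro B N
    obtain ⟨n₁, hn₁⟩ := hub (K * max B 0)
    refine ⟨max n₁ (N + 1), by omega, ?_⟩
    have h1 : tN e n₁ ≤ K * tN e (max n₁ (N + 1)) := tN_mono_K e K hK (le_max_left _ _)
    have h2 : K * max B 0 ≤ K * tN e (max n₁ (N + 1)) := by linarith
    have h3 : max B 0 ≤ tN e (max n₁ (N + 1)) := le_of_mul_le_mul_left h2 hK0
    exact le_trans (le_max_left _ _) h3
  refine ⟨1 / (12 * K), by positivity, ?_⟩
  intro d hd ε hε hε1
  set R : ℝ := 100 * ((d : ℝ) + 1) with hRdef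
  have hd0 : (0 : ℝ) < d := by exact_mod_cast hd
  have hR1 : (1 : ℝ) ≤ R := by rw [hRdef]; nlinarith
  have hR2 : (2 : ℝ) ≤ R := by rw [hRdef]; nlinarith
  set f : ℕ → ℕ := seqQ (tN e) R hg with hfdef
  have hfstrict : StrictMono f := seqQ_strict (tN e) R hg
  refine ⟨Set.range f, Set.infinite_range_of_injective hfstrict.injective, ?_⟩
  intro m hm0 hmono hmQ k hkQ hdk F hF1 hF2 hF3
  have hQfact : ∀ p q : ℕ, p ∈ Set.range f → q ∈ Set.range f → p < q →
      R * tN e p ≤ tN e q := by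
    rintro p q ⟨a, rfl⟩ ⟨b, rfl⟩ hpq
    have hab : a < b := by
      by_contra hc
      push_neg at hc
      exact absurd (hfstrict.le_iff_le.mpr hc) (not_le.mpr hpq)
    exact seqQ_growth (tN e) R hg (fun n => norm_nonneg _) hR1 a b hab
  have hQone : ∀ q : ℕ, q ∈ Set.range f → 1 ≤ tN e q := by
    rintro q ⟨b, rfl⟩
    exact seqQ_one (tN e) R hg b (fun n => norm_nonneg _) (by linarith)
  have hnnQ : ∀ ρ, ρ ≤ d → nn d k m ρ ∈ Set.range f ∧ m ρ < nn d k m ρ := by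
    intro ρ hρ
    unfold nn
    split
    · next h => exact ⟨hmQ (ρ + 1) (by omega) (by omega), hmono ρ h⟩
    · next h =>
        have hρd : ρ = d := by omega
        subst hρd
        exact ⟨hkQ, hdk⟩
  have hw1 : ∀ ρ, ρ ≤ d → 2 * tN e (m ρ) ≤ tN e (nn d k m ρ) := by
    intro ρ hρ
    rcases Nat.eq_zero_or_pos ρ with h0 | hpos
    · subst h0
      rw [hm0, htN0]
      have := norm_nonneg (∑ i ∈ Finset.range (nn d k m 0), e i)
      calc (2 : ℝ) * 0 = 0 := by ring
      _ ≤ tN e (nn d k m 0) := norm_nonneg _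
    · have hmem : m ρ ∈ Set.range f := hmQ ρ hpos hρ
      obtain ⟨hQn, hlt⟩ := hnnQ ρ hρ
      have h1 := hQfact _ _ hmem hQn hlt
      have htp0 : 0 ≤ tN e (m ρ) := norm_nonneg _
      nlinarith
  have hw2 : ∀ ρ, ρ < d → R * tN e (nn d k m ρ) ≤ tN e (nn d k m (ρ + 1)) := by
    intro ρ hρ
    obtain ⟨hQ1, _⟩ := hnnQ ρ (le_of_lt hρ)
    obtain ⟨hQ2, _⟩ := hnnQ (ρ + 1) (by omega)
    have hlt : nn d k m ρ < nn d k m (ρ + 1) := by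
      have e1 : nn d k m ρ = m (ρ + 1) := if_pos hρ
      rw [e1]
      unfold nn
      split
      · next h => exact hmono (ρ + 1) h
      · next h => exact lt_of_le_of_lt (m_mono_le hmono (ρ + 1) d (by omega) le_rfl) hdk
    exact hQfact _ _ hQ1 hQ2 hlt
  have hw3 : ∀ ρ, ρ ≤ d → 1 ≤ tN e (nn d k m ρ) := fun ρ hρ => hQone _ (hnnQ ρ hρ).1
  have hcore := core e K hK1 hK d hd ε hε m hm0 hmono k hdk hw1 hw2 hw3 F
    (fun x h1 h2 => hF1 x h1 h2) (fun x h1 h2 => hF2 x h1 h2)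
    (fun x y h1 h2 h3 h4 h5 => hF3 x y h1 h2 h3 h4 h5)
  have h2 : ε / 2 ≤ ε := by linarith
  exact le_trans hcore h2



variable {X : Type*} [NormedAddCommGroup X] [NormedSpace ℝ X]

set_option maxHeartbeats 1000000 in
lemma forward (e : ℕ → X) (C : ℝ) (hC1 : 1 ≤ C)
    (hC : ∀ (s : Finset ℕ) (hs : s.Nonempty) (a : ℕ → ℝ),
        C⁻¹ * s.sup' hs (fun i => |a i|) ≤ ‖∑ i ∈ s, a i • e i‖ ∧
        ‖∑ i ∈ s, a i • e i‖ ≤ C * s.sup' hs (fun i => |a i|))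
    (γ : ℝ) (hγ : 0 < γ)
    (hQprop : ∀ d : ℕ, 1 ≤ d → ∀ ε : ℝ, 0 < ε → ε < 1 →
      ∃ Q : Set ℕ, Q.Infinite ∧
        ∀ (m : ℕ → ℕ), m 0 = 0 → (∀ s, s < d → m s < m (s + 1)) →
          (∀ s, 1 ≤ s → s ≤ d → m s ∈ Q) →
          ∀ k : ℕ, k ∈ Q → m d < k →
          ∀ F : (Fin k → ℝ) → (Fin k → ℝ),
            (∀ x : Fin k → ℝ, supNorm x = 1 → (∀ i, 0 ≤ x i) →
              (‖∑ i : Fin k, F x i • e (i : ℕ)‖ = 1 ∧ ∀ i, 0 ≤ F x i)) →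
            (∀ x : Fin k → ℝ, supNorm x = 1 → (∀ i, 0 ≤ x i) →
              ∀ i j, x i = x j → F x i = F x j) →
            (∀ x y : Fin k → ℝ, supNorm x = 1 → (∀ i, 0 ≤ x i) →
              supNorm y = 1 → (∀ i, 0 ≤ y i) → supNorm (x - y) ≤ 1 / (d : ℝ) →
              ‖(∑ i : Fin k, F x i • e (i : ℕ)) -
                ∑ i : Fin k, F y i • e (i : ℕ)‖ ≤ γ * ε) →
            ‖(∑ i : Fin k, F (zVec d k m) i • e (i : ℕ)) -
              ‖∑ i ∈ Finset.range k, e i‖⁻¹ • ∑ i ∈ Finset.range k, e i‖ ≤ ε) :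
    False := by
  classical
  have hC0 : (0 : ℝ) < C := lt_of_lt_of_le one_pos hC1
  set ε : ℝ := 1 / (2 * C * C) with hεdef
  have hε : 0 < ε := by positivity
  have hε1 : ε < 1 := by
    rw [hεdef, div_lt_one (by positivity)]
    nlinarith
  have hγε : 0 < γ * ε := mul_pos hγ hε
  set d : ℕ := ⌈2 * (C * C) / (γ * ε)⌉₊ + 1 with hddef
  have hd : 1 ≤ d := by omega
  have hd0 : (0 : ℝ) < d := by exact_mod_cast hd
  have hdR : 2 * (C * C) / (γ * ε) ≤ (d : ℝ) := by
    rw [hddef]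
    push_cast
    have := Nat.le_ceil (2 * (C * C) / (γ * ε))
    linarith
  have hdbound : 2 * (C * C) ≤ (d : ℝ) * (γ * ε) := by
    rw [div_le_iff₀ hγε] at hdR
    linarith
  obtain ⟨Q, hQinf, hQ⟩ := hQprop d hd ε hε hε1
  set m : ℕ → ℕ := seqM Q hQinf with hmdef
  have hm0 : m 0 = 0 := rfl
  have hmono : ∀ s, s < d → m s < m (s + 1) := fun s _ => seqM_lt Q hQinf s
  have hmQ : ∀ s, 1 ≤ s → s ≤ d → m s ∈ Q := by
    intro s h1 _
    cases s with
    | zero => omega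
    | succ j => exact seqM_mem Q hQinf j
  set k : ℕ := (hQinf.exists_gt (m d)).choose with hkdef
  have hkQ : k ∈ Q := (hQinf.exists_gt (m d)).choose_spec.1
  have hdk : m d < k := (hQinf.exists_gt (m d)).choose_spec.2
  have hk0 : 0 < k := lt_of_le_of_lt (Nat.zero_le _) hdk
  have hne : (Finset.range k).Nonempty := ⟨0, Finset.mem_range.mpr hk0⟩
  -- norm equivalence on Fin k vectors
  have hup : ∀ x : Fin k → ℝ, ‖Sm e k x‖ ≤ C * supNorm x := by
    intro x
    have h := (hC (Finset.range k) ⟨0, Finset.mem_range.mpr hk0⟩ (ext x)).2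
    rw [← Sm_eq_range, sup'_eq_supNorm hk0] at h
    exact h
  have hlo : ∀ x : Fin k → ℝ, C⁻¹ * supNorm x ≤ ‖Sm e k x‖ := by
    intro x
    have h := (hC (Finset.range k) ⟨0, Finset.mem_range.mpr hk0⟩ (ext x)).1
    rw [← Sm_eq_range, sup'_eq_supNorm hk0] at h
    exact h
  have hNlow : ∀ x : Fin k → ℝ, supNorm x = 1 → C⁻¹ ≤ ‖Sm e k x‖ := by
    intro x hx
    have := hlo x
    rw [hx, mul_one] at this
    exact this
  have hNpos : ∀ x : Fin k → ℝ, supNorm x = 1 → 0 < ‖Sm e k x‖ :=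
    fun x hx => lt_of_lt_of_le (by positivity) (hNlow x hx)
  -- the normalization map
  set F : (Fin k → ℝ) → (Fin k → ℝ) := fun x i => (‖Sm e k x‖)⁻¹ * x i with hFdef
  have hSmF : ∀ x : Fin k → ℝ, Sm e k (F x) = (‖Sm e k x‖)⁻¹ • Sm e k x :=
    fun x => Sm_smul e k _ x
  have hF1 : ∀ x : Fin k → ℝ, supNorm x = 1 → (∀ i, 0 ≤ x i) →
      (‖∑ i : Fin k, F x i • e (i : ℕ)‖ = 1 ∧ ∀ i, 0 ≤ F x i) := by
    intro x hx hxp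
    constructor
    · show ‖Sm e k (F x)‖ = 1
      rw [hSmF x, norm_smul, Real.norm_eq_abs,
        abs_of_nonneg (inv_nonneg.mpr (norm_nonneg _)),
        inv_mul_cancel₀ (ne_of_gt (hNpos x hx))]
    · intro i
      exact mul_nonneg (inv_nonneg.mpr (norm_nonneg _)) (hxp i)
  have hF2 : ∀ x : Fin k → ℝ, supNorm x = 1 → (∀ i, 0 ≤ x i) →
      ∀ i j, x i = x j → F x i = F x j := by
    intro x _ _ i j hij
    show (‖Sm e k x‖)⁻¹ * x i = (‖Sm e k x‖)⁻¹ * x j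
    rw [hij]
  have hF3 : ∀ x y : Fin k → ℝ, supNorm x = 1 → (∀ i, 0 ≤ x i) →
      supNorm y = 1 → (∀ i, 0 ≤ y i) → supNorm (x - y) ≤ 1 / (d : ℝ) →
      ‖(∑ i : Fin k, F x i • e (i : ℕ)) - ∑ i : Fin k, F y i • e (i : ℕ)‖ ≤ γ * ε := by
    intro x y hx hxp hy hyp hxy
    have hNx := hNpos x hx
    have hNy := hNpos y hy
    have hNx' := hNlow x hx
    have hNy' := hNlow y hy
    have hNxC : (‖Sm e k x‖)⁻¹ ≤ C := by
      have h1 : (‖Sm e k x‖)⁻¹ ≤ (C⁻¹)⁻¹ := inv_anti₀ (by positivity) hNx'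
      rwa [inv_inv] at h1
    have hdiff : ‖Sm e k x - Sm e k y‖ ≤ C * (1 / (d : ℝ)) := by
      rw [Sm_sub_pi]
      calc ‖Sm e k (x - y)‖ ≤ C * supNorm (x - y) := hup (x - y)
      _ ≤ C * (1 / (d : ℝ)) := mul_le_mul_of_nonneg_left hxy (le_of_lt hC0)
    have hidd : Sm e k (F x) - Sm e k (F y)
        = (‖Sm e k x‖)⁻¹ • (Sm e k x - Sm e k y)
          + ((‖Sm e k x‖)⁻¹ - (‖Sm e k y‖)⁻¹) • Sm e k y := by
      rw [hSmF x, hSmF y, smul_sub, sub_smul]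
      abel
    have habs : |‖Sm e k y‖ - ‖Sm e k x‖| ≤ ‖Sm e k x - Sm e k y‖ := by
      rw [norm_sub_rev]
      exact abs_norm_sub_norm_le _ _
    have hterm1 : ‖(‖Sm e k x‖)⁻¹ • (Sm e k x - Sm e k y)‖ ≤ C * ‖Sm e k x - Sm e k y‖ := by
      rw [norm_smul, Real.norm_eq_abs, abs_of_nonneg (inv_nonneg.mpr (norm_nonneg _))]
      exact mul_le_mul_of_nonneg_right hNxC (norm_nonneg _)
    have hterm2 : ‖((‖Sm e k x‖)⁻¹ - (‖Sm e k y‖)⁻¹) • Sm e k y‖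
        ≤ C * ‖Sm e k x - Sm e k y‖ := by
      rw [norm_smul, Real.norm_eq_abs]
      have hNx0 : ‖Sm e k x‖ ≠ 0 := ne_of_gt hNx
      have hNy0 : ‖Sm e k y‖ ≠ 0 := ne_of_gt hNy
      have heq : ((‖Sm e k x‖)⁻¹ - (‖Sm e k y‖)⁻¹) * ‖Sm e k y‖
          = (‖Sm e k y‖ - ‖Sm e k x‖) / ‖Sm e k x‖ := by
        field_simp
      calc |(‖Sm e k x‖)⁻¹ - (‖Sm e k y‖)⁻¹| * ‖Sm e k y‖
          = |((‖Sm e k x‖)⁻¹ - (‖Sm e k y‖)⁻¹) * ‖Sm e k y‖| := by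
            rw [abs_mul, abs_of_pos hNy]
      _ = |‖Sm e k y‖ - ‖Sm e k x‖| / ‖Sm e k x‖ := by
            rw [heq, abs_div, abs_of_pos hNx]
      _ ≤ |‖Sm e k y‖ - ‖Sm e k x‖| * C := by
            rw [div_eq_mul_inv]
            exact mul_le_mul_of_nonneg_left hNxC (abs_nonneg _)
      _ ≤ C * ‖Sm e k x - Sm e k y‖ := by
            rw [mul_comm]
            exact mul_le_mul_of_nonneg_left habs (le_of_lt hC0)
    have hfin : ‖Sm e k (F x) - Sm e k (F y)‖ ≤ 2 * C * ‖Sm e k x - Sm e k y‖ := by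
      rw [hidd]
      have := norm_add_le ((‖Sm e k x‖)⁻¹ • (Sm e k x - Sm e k y))
        (((‖Sm e k x‖)⁻¹ - (‖Sm e k y‖)⁻¹) • Sm e k y)
      linarith
    show ‖Sm e k (F x) - Sm e k (F y)‖ ≤ γ * ε
    calc ‖Sm e k (F x) - Sm e k (F y)‖ ≤ 2 * C * ‖Sm e k x - Sm e k y‖ := hfin
    _ ≤ 2 * C * (C * (1 / (d : ℝ))) := by
        apply mul_le_mul_of_nonneg_left hdiff (by positivity)
    _ = 2 * (C * C) / (d : ℝ) := by field_simp
    _ ≤ γ * ε := by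
        rw [div_le_iff₀ hd0]
        linarith
  have hcon := hQ m hm0 hmono hmQ k hkQ hdk F hF1 hF2 hF3
  -- derive the contradiction
  set zz : Fin k → ℝ := zVec d k m with hzzdef
  set τ : ℝ := ‖∑ i ∈ Finset.range k, e i‖ with hτdef
  have hτC : τ ≤ C := by
    have h1 : Sm e k (fun _ : Fin k => (1 : ℝ)) = ∑ i ∈ Finset.range k, e i := Sm_one e k
    have h2 : supNorm (fun _ : Fin k => (1 : ℝ)) = 1 := by
      apply supNorm_eq_one _ (fun i => by norm_num) ⟨0, hk0⟩
      norm_num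
    have h3 := hup (fun _ : Fin k => (1 : ℝ))
    rw [h1, h2, mul_one] at h3
    exact h3
  have hτlow : C⁻¹ ≤ τ := by
    have h1 : Sm e k (fun _ : Fin k => (1 : ℝ)) = ∑ i ∈ Finset.range k, e i := Sm_one e k
    have h2 : supNorm (fun _ : Fin k => (1 : ℝ)) = 1 := by
      apply supNorm_eq_one _ (fun i => by norm_num) ⟨0, hk0⟩
      norm_num
    have h3 := hlo (fun _ : Fin k => (1 : ℝ))
    rw [h1, h2, mul_one] at h3
    exact h3
  have hτ0 : 0 < τ := lt_of_lt_of_le (by positivity) hτlow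
  set v : Fin k → ℝ := fun i => F zz i - τ⁻¹ * 1 with hvdef
  have heq : Sm e k v = (∑ i : Fin k, F zz i • e (i : ℕ)) - τ⁻¹ • ∑ i ∈ Finset.range k, e i := by
    have hsm : Sm e k (fun _ : Fin k => τ⁻¹ * 1) = τ⁻¹ • Sm e k (fun _ : Fin k => (1 : ℝ)) :=
      Sm_smul e k τ⁻¹ (fun _ => 1)
    calc Sm e k v = Sm e k (F zz) - Sm e k (fun _ : Fin k => τ⁻¹ * 1) := Sm_sub e k _ _
    _ = Sm e k (F zz) - τ⁻¹ • Sm e k (fun _ : Fin k => (1 : ℝ)) := by rw [hsm]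
    _ = (∑ i : Fin k, F zz i • e (i : ℕ)) - τ⁻¹ • ∑ i ∈ Finset.range k, e i := by
        rw [Sm_one]
        rfl
  have hcon2 : ‖Sm e k v‖ ≤ ε := by
    rw [heq]
    exact hcon
  -- the coordinate at m d
  set ι : Fin k := ⟨m d, hdk⟩ with hιdef
  have hz0 : zz ι = 0 := by
    rw [hzzdef]
    show (∑ s ∈ Finset.Icc 1 d, (1 - ((s : ℝ) - 1) / (d : ℝ)) *
      (if m (s - 1) ≤ ((ι : Fin k) : ℕ) ∧ ((ι : Fin k) : ℕ) < m s then 1 else 0)) = 0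
    apply Finset.sum_eq_zero
    intro s hs
    rw [Finset.mem_Icc] at hs
    have h1 : m s ≤ m d := m_mono_le hmono s d hs.2 le_rfl
    have h2 : ¬ (m (s - 1) ≤ ((ι : Fin k) : ℕ) ∧ ((ι : Fin k) : ℕ) < m s) := by
      rintro ⟨_, hb⟩
      have : ((ι : Fin k) : ℕ) = m d := rfl
      omega
    rw [if_neg h2, mul_zero]
  have hvι : |v ι| = τ⁻¹ := by
    have h1 : v ι = (‖Sm e k zz‖)⁻¹ * zz ι - τ⁻¹ * 1 := rfl
    rw [h1, hz0, mul_zero, mul_one, zero_sub, abs_neg, abs_of_pos (inv_pos.mpr hτ0)]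
  have hlow2 : C⁻¹ * τ⁻¹ ≤ ‖Sm e k v‖ := by
    have h1 := hlo v
    have h2 : τ⁻¹ ≤ supNorm v := by
      rw [← hvι]
      exact le_supNorm v ι
    calc C⁻¹ * τ⁻¹ ≤ C⁻¹ * supNorm v := by
          apply mul_le_mul_of_nonneg_left h2 (by positivity)
    _ ≤ ‖Sm e k v‖ := h1
  have hCτ : C⁻¹ * C⁻¹ ≤ C⁻¹ * τ⁻¹ := by
    apply mul_le_mul_of_nonneg_left _ (by positivity)
    exact inv_anti₀ hτ0 hτC
  have hfinal : C⁻¹ * C⁻¹ ≤ ε := le_trans hCτ (le_trans hlow2 hcon2)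
  have : C⁻¹ * C⁻¹ = 2 * ε := by
    rw [hεdef]
    field_simp
  linarith


end Stmt19

/-- Corollary 6.5 of the paper: a normalized unconditional basis `(e_i)` of
a Banach space `X` has the local Property Q if and only if it is not equivalent to the
canonical basis of `c_0`. The sequence is 0-indexed; a map `F : S⁺_{ℓ∞^k} → S⁺_{X_k}` is
encoded by its coordinate functions, `F x = ∑_{i<k} (F x) i • e i`. -/
theorem stmt_19 {X : Type*} [NormedAddCommGroup X] [NormedSpace ℝ X] [CompleteSpace X]
    (e : ℕ → X)
    (hnorm : ∀ i, ‖e i‖ = 1)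
    (hbasis : ∀ x : X, ∃! a : ℕ → ℝ,
      Filter.Tendsto (fun n => ∑ i ∈ Finset.range n, a i • e i) Filter.atTop (nhds x))
    (huncond : ∃ K : ℝ, 1 ≤ K ∧ ∀ (s : Finset ℕ) (a b : ℕ → ℝ),
      (∀ i ∈ s, |a i| ≤ |b i|) → ‖∑ i ∈ s, a i • e i‖ ≤ K * ‖∑ i ∈ s, b i • e i‖) :
    -- local Property Q:
    (∃ γ : ℝ, 0 < γ ∧ ∀ d : ℕ, 1 ≤ d → ∀ ε : ℝ, 0 < ε → ε < 1 →
      ∃ Q : Set ℕ, Q.Infinite ∧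
        ∀ (m : ℕ → ℕ), m 0 = 0 → (∀ s, s < d → m s < m (s + 1)) →
          (∀ s, 1 ≤ s → s ≤ d → m s ∈ Q) →
          ∀ k : ℕ, k ∈ Q → m d < k →
          ∀ F : (Fin k → ℝ) → (Fin k → ℝ),
            (∀ x : Fin k → ℝ, supNorm x = 1 → (∀ i, 0 ≤ x i) →
              (‖∑ i : Fin k, F x i • e (i : ℕ)‖ = 1 ∧ ∀ i, 0 ≤ F x i)) →
            (∀ x : Fin k → ℝ, supNorm x = 1 → (∀ i, 0 ≤ x i) →
              ∀ i j, x i = x j → F x i = F x j) →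
            (∀ x y : Fin k → ℝ, supNorm x = 1 → (∀ i, 0 ≤ x i) →
              supNorm y = 1 → (∀ i, 0 ≤ y i) → supNorm (x - y) ≤ 1 / (d : ℝ) →
              ‖(∑ i : Fin k, F x i • e (i : ℕ)) -
                ∑ i : Fin k, F y i • e (i : ℕ)‖ ≤ γ * ε) →
            ‖(∑ i : Fin k, F (zVec d k m) i • e (i : ℕ)) -
              ‖∑ i ∈ Finset.range k, e i‖⁻¹ • ∑ i ∈ Finset.range k, e i‖ ≤ ε)
    ↔
    -- `(e_i)` is not equivalent to the canonical basis of `c_0`: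
    ¬ (∃ C : ℝ, 1 ≤ C ∧ ∀ (s : Finset ℕ) (hs : s.Nonempty) (a : ℕ → ℝ),
        C⁻¹ * s.sup' hs (fun i => |a i|) ≤ ‖∑ i ∈ s, a i • e i‖ ∧
        ‖∑ i ∈ s, a i • e i‖ ≤ C * s.sup' hs (fun i => |a i|)) := by
  
  obtain ⟨K, hK1, hK⟩ := huncond
  constructor
  · intro hQ hc0
    obtain ⟨C, hC1, hC⟩ := hc0
    obtain ⟨γ, hγ, hQprop⟩ := hQ
    exact Stmt19.forward e C hC1 hC γ hγ hQprop
  · intro hNC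
    obtain ⟨_, _, hP⟩ := Stmt19.backward e K hK1 hnorm hK hNC
    exact ⟨1 / (12 * K), by positivity, hP⟩
end
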